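/- arXiv:2111.09375 — 2 statements merged into one kernel-verified Lean document; each statement's English description precedes it below -/
import Mathlib

section
/- Let μ = μ₁⊗⋯⊗μ_k be a product probability measure and let f : V → ℝ have degree at most d. Then ‖f‖₄⁴ ≤ 2·9^d · Σ_{T⊆[k], |T|≤d} (9d)^{|T|} · E_{x∼μ_T}[(I_{T,x}[f])²]. -/
open Finset

namespace GLL

variable {k : ℕ} {V : Fin k → Type} [∀ i, Fintype (V i)] [∀ i, DecidableEq (V i)]

/-- Expectation of `f` with respect to the (finitely supported) measure `μ`. -/
def expect (μ f : (∀ i, V i) → ℝ) : ℝ := ∑ x, μ x * f x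

/-- `μ` is a probability measure. -/
def IsProb (μ : (∀ i, V i) → ℝ) : Prop := (∀ x, 0 ≤ μ x) ∧ ∑ x, μ x = 1

/-- The marginal `μ_S` evaluated at (the `S`-coordinates of) `x`. -/
def marg (μ : (∀ i, V i) → ℝ) (S : Finset (Fin k)) (x : ∀ i, V i) : ℝ :=
  ∑ z, if ∀ i ∈ S, z i = x i then μ z else 0

/-- The link (conditional) measure `μ_x` for `x ∈ V_S`, viewed as a measure on
full points agreeing with `x` on `S`. -/
noncomputable def cond (μ : (∀ i, V i) → ℝ) (S : Finset (Fin k)) (x z : ∀ i, V i) : ℝ :=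
  if ∀ i ∈ S, z i = x i then μ z / marg μ S x else 0

/-- The averaging operator `A_S`: `A_S f (x) = E_{y ∼ μ_{x_S}} [f(x_S, y)]`.
Applied to an `S'`-junta `f`, this is also the operator `A_{S',S}`. -/
noncomputable def Aop (μ : (∀ i, V i) → ℝ) (S : Finset (Fin k)) (f : (∀ i, V i) → ℝ)
    (x : ∀ i, V i) : ℝ :=
  ∑ z, cond μ S x z * f z

/-- The Efron–Stein component `f^{=S} = ∑_{T ⊆ S} (-1)^{|S∖T|} A_T f`. -/
noncomputable def ES (μ : (∀ i, V i) → ℝ) (S : Finset (Fin k)) (f : (∀ i, V i) → ℝ)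
    (x : ∀ i, V i) : ℝ :=
  ∑ T ∈ S.powerset, (-1 : ℝ) ^ (S.card - T.card) * Aop μ T f x

/-- The low-degree part `f^{≤ d} = ∑_{|S| ≤ d} f^{=S}`. -/
noncomputable def lowPart (μ : (∀ i, V i) → ℝ) (d : ℕ) (f : (∀ i, V i) → ℝ)
    (x : ∀ i, V i) : ℝ :=
  ∑ S ∈ univ.powerset.filter (fun S : Finset (Fin k) => S.card ≤ d), ES μ S f x

/-- The Laplacian `L_S[f] = ∑_{T ⊇ S} f^{=T}`. -/
noncomputable def Lap (μ : (∀ i, V i) → ℝ) (S : Finset (Fin k)) (f : (∀ i, V i) → ℝ)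
    (x : ∀ i, V i) : ℝ :=
  ∑ T ∈ univ.powerset.filter (fun T : Finset (Fin k) => S ⊆ T), ES μ T f x

/-- The truncated Laplacian `L_S^{≤d}[f] = ∑_{T ⊇ S, |T| ≤ d} f^{=T}`. -/
noncomputable def LapLe (μ : (∀ i, V i) → ℝ) (d : ℕ) (S : Finset (Fin k))
    (f : (∀ i, V i) → ℝ) (x : ∀ i, V i) : ℝ :=
  ∑ T ∈ univ.powerset.filter (fun T : Finset (Fin k) => S ⊆ T ∧ T.card ≤ d), ES μ T f x

/-- The influence `I_{S,x}[f] = ‖L_S[f](x,·)‖²_{L²(μ_x)}`. -/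
noncomputable def Inf (μ : (∀ i, V i) → ℝ) (S : Finset (Fin k)) (f : (∀ i, V i) → ℝ)
    (x : ∀ i, V i) : ℝ :=
  ∑ z, cond μ S x z * (Lap μ S f z) ^ 2

/-- The truncated influence `I^{≤d}_{S,x}[f] = ‖L_S^{≤d}[f](x,·)‖²_{L²(μ_x)}`. -/
noncomputable def InfLe (μ : (∀ i, V i) → ℝ) (d : ℕ) (S : Finset (Fin k))
    (f : (∀ i, V i) → ℝ) (x : ∀ i, V i) : ℝ :=
  ∑ z, cond μ S x z * (LapLe μ d S f z) ^ 2

/-- `‖f‖₂²` with respect to `μ`. -/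
def normSq (μ f : (∀ i, V i) → ℝ) : ℝ := ∑ x, μ x * (f x) ^ 2

/-- `‖f‖₄⁴` with respect to `μ`. -/
def norm4p4 (μ f : (∀ i, V i) → ℝ) : ℝ := ∑ x, μ x * (f x) ^ 4

/-- `‖f‖₂` with respect to `μ`. -/
noncomputable def l2norm (μ f : (∀ i, V i) → ℝ) : ℝ := Real.sqrt (normSq μ f)

/-- `‖f‖_∞`: the maximum of `|f|` over the support of `μ`. -/
noncomputable def supNorm (μ f : (∀ i, V i) → ℝ) : ℝ :=
  sSup ((fun x => |f x|) '' {x | 0 < μ x})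

/-- Inner product `⟨f, g⟩ = E_{x∼μ}[f(x) g(x)]`. -/
def inner' (μ f g : (∀ i, V i) → ℝ) : ℝ := ∑ x, μ x * (f x * g x)

/-- The pair `{i,j}`-skeleton of `μ` is `ε`-pseudorandom. -/
def PairPseudo (μ : (∀ i, V i) → ℝ) (ε : ℝ) (i j : Fin k) : Prop :=
  ∀ (f₁ : V i → ℝ) (f₂ : V j → ℝ),
    |expect μ (fun x => f₁ (x i) * f₂ (x j)) -
        expect μ (fun x => f₁ (x i)) * expect μ (fun x => f₂ (x j))| ≤
      ε * Real.sqrt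
        ((expect μ (fun x => f₁ (x i) ^ 2) - expect μ (fun x => f₁ (x i)) ^ 2) *
          (expect μ (fun x => f₂ (x j) ^ 2) - expect μ (fun x => f₂ (x j)) ^ 2))

/-- `μ` is an `ε`-product measure: every link of every restriction of size `≤ k - 2`
has `ε`-pseudorandom skeletons. -/
def EpsProduct (μ : (∀ i, V i) → ℝ) (ε : ℝ) : Prop :=
  ∀ S : Finset (Fin k), S.card ≤ k - 2 → ∀ x, 0 < marg μ S x →
    ∀ i j : Fin k, i ∉ S → j ∉ S → i ≠ j → PairPseudo (cond μ S x) ε i j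

/-- `‖f(x,·)‖_{L²(μ_x)}` for `x ∈ V_S`. -/
noncomputable def restrictNorm (μ : (∀ i, V i) → ℝ) (S : Finset (Fin k)) (x : ∀ i, V i)
    (f : (∀ i, V i) → ℝ) : ℝ :=
  Real.sqrt (∑ z, cond μ S x z * (f z) ^ 2)

/-- `f` is `(d, δ)`-global: all restrictions of at most `d` coordinates have
`2`-norm at most `δ`. -/
def IsGlobal (μ : (∀ i, V i) → ℝ) (d : ℕ) (δ : ℝ) (f : (∀ i, V i) → ℝ) : Prop :=
  ∀ S : Finset (Fin k), S.card ≤ d → ∀ x, 0 < marg μ S x → restrictNorm μ S x f ≤ δ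

/-- `f` is an `S`-junta: it depends only on the coordinates in `S`. -/
def Junta (S : Finset (Fin k)) (f : (∀ i, V i) → ℝ) : Prop :=
  ∀ x y, (∀ i ∈ S, x i = y i) → f x = f y

/-- The noise operator `T_ρ f = ∑_{S ⊆ [k]} ρ^{|S|} (1-ρ)^{k-|S|} A_S f`. -/
noncomputable def noiseOp (μ : (∀ i, V i) → ℝ) (ρ : ℝ) (f : (∀ i, V i) → ℝ)
    (x : ∀ i, V i) : ℝ :=
  ∑ S ∈ (univ : Finset (Fin k)).powerset, ρ ^ S.card * (1 - ρ) ^ (k - S.card) * Aop μ S f x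

/-- The up-down walk operator `T = (1/k) ∑_{i=1}^k A_{[k]∖{i}}`. -/
noncomputable def upDown (μ : (∀ i, V i) → ℝ) (f : (∀ i, V i) → ℝ) (x : ∀ i, V i) : ℝ :=
  (1 / (k : ℝ)) * ∑ i : Fin k, Aop μ (univ.erase i) f x

/-- The product measure `μ₁ ⊗ ⋯ ⊗ μ_k`. -/
def prodMeasure (μi : ∀ i, V i → ℝ) : (∀ i, V i) → ℝ := fun x => ∏ i, μi i (x i)

/-- `f` has degree at most `d`: `f^{=S} = 0` whenever `|S| > d`. -/
def DegLe (μ : (∀ i, V i) → ℝ) (d : ℕ) (f : (∀ i, V i) → ℝ) : Prop :=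
  ∀ S : Finset (Fin k), d < S.card → ∀ x, ES μ S f x = 0

/-- `{F S}_{S ⊆ [k]}` is an `(α, ε')`-approximate Efron–Stein decomposition of `f`. -/
noncomputable def ApproxES (μ : (∀ i, V i) → ℝ) (α ε' : ℝ) (f : (∀ i, V i) → ℝ)
    (F : Finset (Fin k) → (∀ i, V i) → ℝ) : Prop :=
  l2norm μ f ≤ α ∧
    l2norm μ (fun x => f x - ∑ S ∈ (univ : Finset (Fin k)).powerset, F S x) ≤ ε' ∧
    ∀ S : Finset (Fin k), ∃ h : (∀ i, V i) → ℝ,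
      l2norm μ h ≤ α ∧ l2norm μ (fun x => ES μ S h x - F S x) ≤ ε'

set_option linter.unusedSectionVars false

section CleanWorld

variable {k : ℕ} {V : Fin k → Type} [∀ i, Fintype (V i)] [∀ i, DecidableEq (V i)]

/-- Clean product kernel: the conditional measure of the product measure, with no division. -/
noncomputable def kk (μi : ∀ i, V i → ℝ) (W : Finset (Fin k)) (x z : ∀ i, V i) : ℝ :=
  ∏ i, if i ∈ W then (if z i = x i then (1:ℝ) else 0) else μi i (z i)

noncomputable def PP (μi : ∀ i, V i → ℝ) (W : Finset (Fin k)) (f : (∀ i, V i) → ℝ)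
    (x : ∀ i, V i) : ℝ :=
  ∑ z, kk μi W x z * f z

noncomputable def ee (μi : ∀ i, V i → ℝ) (S : Finset (Fin k)) (f : (∀ i, V i) → ℝ)
    (x : ∀ i, V i) : ℝ :=
  ∑ T ∈ S.powerset, (-1 : ℝ) ^ (S.card - T.card) * PP μi T f x

noncomputable def ll (μi : ∀ i, V i → ℝ) (R : Finset (Fin k)) (f : (∀ i, V i) → ℝ)
    (x : ∀ i, V i) : ℝ :=
  ∑ T ∈ univ.powerset.filter (fun T : Finset (Fin k) => R ⊆ T), ee μi T f x

noncomputable def ii (μi : ∀ i, V i → ℝ) (R : Finset (Fin k)) (f : (∀ i, V i) → ℝ)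
    (x : ∀ i, V i) : ℝ :=
  PP μi R (fun z => (ll μi R f z)^2) x

variable {μi : ∀ i, V i → ℝ}

lemma sum_pi_prod (g : ∀ i, V i → ℝ) :
    ∑ z : ∀ i, V i, ∏ i, g i (z i) = ∏ i, ∑ a, g i a := by
  rw [Finset.prod_univ_sum, Fintype.piFinset_univ]

lemma kk_nonneg (hnn : ∀ i x, 0 ≤ μi i x) (W : Finset (Fin k)) (x z : ∀ i, V i) :
    0 ≤ kk μi W x z := by
  refine Finset.prod_nonneg fun i _ => ?_
  split
  · split <;> norm_num
  · exact hnn i _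

lemma kk_eq_zero {W : Finset (Fin k)} {x z : ∀ i, V i} (h : ¬ ∀ i ∈ W, z i = x i) :
    kk μi W x z = 0 := by
  push_neg at h
  obtain ⟨i, hiW, hne⟩ := h
  refine Finset.prod_eq_zero (Finset.mem_univ i) ?_
  simp [hiW, hne]

lemma kk_congr {W : Finset (Fin k)} {x y : ∀ i, V i} (h : ∀ i ∈ W, x i = y i)
    (z : ∀ i, V i) : kk μi W x z = kk μi W y z := by
  refine Finset.prod_congr rfl fun i _ => ?_
  by_cases hiW : i ∈ W
  · simp [hiW, h i hiW]
  · simp [hiW]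

lemma kk_sum (hsum : ∀ i, ∑ a, μi i a = 1) (W : Finset (Fin k)) (x : ∀ i, V i) :
    ∑ z, kk μi W x z = 1 := by
  unfold kk
  rw [sum_pi_prod (g := fun i b => if i ∈ W then (if b = x i then (1:ℝ) else 0) else μi i b)]
  refine Finset.prod_eq_one fun i _ => ?_
  by_cases hiW : i ∈ W
  · simp [hiW]
  · simp [hiW, hsum i]

lemma kk_symm (W : Finset (Fin k)) (x z : ∀ i, V i) :
    prodMeasure μi x * kk μi W x z = prodMeasure μi z * kk μi W z x := by
  unfold prodMeasure kk
  rw [← Finset.prod_mul_distrib, ← Finset.prod_mul_distrib]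
  refine Finset.prod_congr rfl fun i _ => ?_
  by_cases hiW : i ∈ W
  · by_cases he : z i = x i
    · simp [hiW, he]
    · simp [hiW, he, Ne.symm he]
  · simp [hiW, mul_comm]

lemma kk_comp (hsum : ∀ i, ∑ a, μi i a = 1) (Vs T : Finset (Fin k)) (x u : ∀ i, V i) :
    ∑ z, kk μi Vs x z * kk μi T z u = kk μi (Vs ∩ T) x u := by
  unfold kk
  simp_rw [← Finset.prod_mul_distrib]
  rw [sum_pi_prod (g := fun i b =>
    (if i ∈ Vs then (if b = x i then (1:ℝ) else 0) else μi i b) *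
    (if i ∈ T then (if u i = b then (1:ℝ) else 0) else μi i (u i)))]
  refine Finset.prod_congr rfl fun i _ => ?_
  by_cases h1 : i ∈ Vs <;> by_cases h2 : i ∈ T
  · simp [h1, h2, Finset.mem_inter]
  · simp [h1, h2, Finset.mem_inter]
  · simp [h1, h2, Finset.mem_inter]
  · simp only [h1, h2, if_false]
    rw [← Finset.sum_mul, hsum i, one_mul]
    simp [Finset.mem_inter, h1, h2]

lemma PP_comp (hsum : ∀ i, ∑ a, μi i a = 1) (Vs T : Finset (Fin k)) (f : (∀ i, V i) → ℝ)
    (x : ∀ i, V i) : PP μi Vs (PP μi T f) x = PP μi (Vs ∩ T) f x := by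
  unfold PP
  simp_rw [Finset.mul_sum]
  rw [Finset.sum_comm]
  refine Finset.sum_congr rfl fun u _ => ?_
  rw [← kk_comp hsum Vs T x u, Finset.sum_mul]
  exact Finset.sum_congr rfl fun z _ => by ring

lemma PP_univ (f : (∀ i, V i) → ℝ) (x : ∀ i, V i) : PP μi univ f x = f x := by
  unfold PP
  rw [Finset.sum_eq_single x]
  · have h1 : kk μi univ x x = 1 := by
      unfold kk; refine Finset.prod_eq_one fun i _ => by simp
    rw [h1, one_mul]
  · intro z _ hzx
    have h2 : ¬ ∀ i ∈ univ, z i = x i := by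
      simp only [Finset.mem_univ, true_implies]
      exact fun h => hzx (funext h)
    rw [kk_eq_zero h2, zero_mul]
  · exact fun h => absurd (Finset.mem_univ x) h

lemma PP_congr {W : Finset (Fin k)} {x y : ∀ i, V i} (h : ∀ i ∈ W, x i = y i)
    (f : (∀ i, V i) → ℝ) : PP μi W f x = PP μi W f y :=
  Finset.sum_congr rfl fun z _ => by rw [kk_congr h]

lemma PP_fix (hsum : ∀ i, ∑ a, μi i a = 1) {W : Finset (Fin k)} {f : (∀ i, V i) → ℝ}
    {x : ∀ i, V i} (hf : ∀ z, (∀ i ∈ W, z i = x i) → f z = f x) :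
    PP μi W f x = f x := by
  unfold PP
  have h1 : ∀ z : ∀ i, V i, kk μi W x z * f z = kk μi W x z * f x := fun z => by
    by_cases h : ∀ i ∈ W, z i = x i
    · rw [hf z h]
    · rw [kk_eq_zero h, zero_mul, zero_mul]
  rw [Finset.sum_congr rfl fun z _ => h1 z, ← Finset.sum_mul, kk_sum hsum, one_mul]

lemma PP_mul_junta {W : Finset (Fin k)} {a b : (∀ i, V i) → ℝ} {x : ∀ i, V i}
    (ha : ∀ z, (∀ i ∈ W, z i = x i) → a z = a x) :
    PP μi W (fun z => a z * b z) x = a x * PP μi W b x := by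
  unfold PP
  rw [Finset.mul_sum]
  refine Finset.sum_congr rfl fun z _ => ?_
  dsimp only
  by_cases h : ∀ i ∈ W, z i = x i
  · rw [ha z h]; ring
  · rw [kk_eq_zero h]; ring

lemma PP_sum {ι : Type*} (W : Finset (Fin k)) (s : Finset ι) (F : ι → (∀ i, V i) → ℝ)
    (x : ∀ i, V i) :
    PP μi W (fun z => ∑ p ∈ s, F p z) x = ∑ p ∈ s, PP μi W (F p) x := by
  unfold PP
  simp_rw [Finset.mul_sum]
  exact Finset.sum_comm

lemma PP_mul_const (W : Finset (Fin k)) (c : ℝ) (f : (∀ i, V i) → ℝ) (x : ∀ i, V i) :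
    PP μi W (fun z => c * f z) x = c * PP μi W f x := by
  unfold PP
  rw [Finset.mul_sum]
  exact Finset.sum_congr rfl fun z _ => by ring

lemma PP_zero (W : Finset (Fin k)) (x : ∀ i, V i) : PP μi W (fun _ => (0:ℝ)) x = 0 := by
  unfold PP; simp

lemma PP_nonneg (hnn : ∀ i x, 0 ≤ μi i x) {W : Finset (Fin k)} {f : (∀ i, V i) → ℝ}
    (hf : ∀ z, 0 ≤ f z) (x : ∀ i, V i) : 0 ≤ PP μi W f x :=
  Finset.sum_nonneg fun z _ => mul_nonneg (kk_nonneg hnn W x z) (hf z)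

lemma PP_mono (hnn : ∀ i x, 0 ≤ μi i x) {W : Finset (Fin k)} {f g : (∀ i, V i) → ℝ}
    (h : ∀ z, f z ≤ g z) (x : ∀ i, V i) : PP μi W f x ≤ PP μi W g x :=
  Finset.sum_le_sum fun z _ => mul_le_mul_of_nonneg_left (h z) (kk_nonneg hnn W x z)

lemma PP_adjoint (W : Finset (Fin k)) (f g : (∀ i, V i) → ℝ) :
    ∑ x, prodMeasure μi x * (PP μi W f x * g x)
      = ∑ x, prodMeasure μi x * (f x * PP μi W g x) := by
  unfold PP
  have L : ∀ x : ∀ i, V i, prodMeasure μi x * ((∑ z, kk μi W x z * f z) * g x)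
      = ∑ z, (prodMeasure μi x * kk μi W x z) * (f z * g x) := by
    intro x; rw [Finset.sum_mul, Finset.mul_sum]
    exact Finset.sum_congr rfl fun z _ => by ring
  have R : ∀ z : ∀ i, V i, prodMeasure μi z * (f z * (∑ x, kk μi W z x * g x))
      = ∑ x, (prodMeasure μi z * kk μi W z x) * (f z * g x) := by
    intro z; simp only [Finset.mul_sum]
    exact Finset.sum_congr rfl fun x _ => by ring
  simp_rw [L]
  rw [Finset.sum_comm]
  simp_rw [R]
  refine Finset.sum_congr rfl fun z _ => Finset.sum_congr rfl fun x _ => ?_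
  rw [kk_symm]

lemma neg_one_pow_sub {m j : ℕ} (h : j ≤ m) :
    (-1 : ℝ) ^ (m - j) = (-1) ^ m * (-1) ^ j := by
  have h2 : ((-1 : ℝ) ^ j) * ((-1) ^ j) = 1 := by
    rw [← pow_add, ← two_mul, pow_mul]; norm_num
  have h3 : (-1 : ℝ) ^ (m - j) * (-1) ^ j = (-1) ^ m := by
    rw [← pow_add, Nat.sub_add_cancel h]
  calc (-1 : ℝ) ^ (m - j) = (-1) ^ (m - j) * ((-1) ^ j * (-1) ^ j) := by rw [h2, mul_one]
    _ = ((-1) ^ (m - j) * (-1) ^ j) * (-1) ^ j := by ring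
    _ = (-1) ^ m * (-1) ^ j := by rw [h3]

lemma sum_powerset_neg_one_pow_card_real {α : Type*} [DecidableEq α] (A : Finset α) :
    (∑ T ∈ A.powerset, (-1 : ℝ) ^ T.card) = if A = ∅ then 1 else 0 := by
  have h := Finset.sum_powerset_neg_one_pow_card (α := α) (x := A)
  have h2 : ((∑ m ∈ A.powerset, (-1 : ℤ) ^ m.card : ℤ) : ℝ)
      = ∑ T ∈ A.powerset, (-1:ℝ)^T.card := by push_cast; rfl
  rw [← h2, h]
  split <;> norm_num

lemma sum_powerset_pow_card {α : Type*} [DecidableEq α] (A : Finset α) (x : ℝ) :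
    (∑ T ∈ A.powerset, x ^ T.card) = (x + 1) ^ A.card := by
  have h := Finset.sum_pow_mul_eq_add_pow x 1 A
  simp only [one_pow, mul_one] at h
  exact h

lemma mobius (hsum : ∀ i, ∑ a, μi i a = 1) (W S : Finset (Fin k)) (f : (∀ i, V i) → ℝ)
    (x : ∀ i, V i) :
    ∑ T ∈ S.powerset, (-1 : ℝ) ^ (S.card - T.card) * PP μi (T ∩ W) f x
      = if S ⊆ W then ee μi S f x else 0 := by
  have e1 : ∑ T ∈ S.powerset, (-1 : ℝ) ^ (S.card - T.card) * PP μi (T ∩ W) f x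
      = ∑ p ∈ (S ∩ W).powerset ×ˢ (S \ W).powerset,
          (-1 : ℝ) ^ (S.card - (p.1.card + p.2.card)) * PP μi p.1 f x := by
    refine Finset.sum_nbij' (i := fun T => (T ∩ W, T \ W)) (j := fun p => p.1 ∪ p.2)
      ?_ ?_ ?_ ?_ ?_
    · intro T hT
      rw [Finset.mem_powerset] at hT
      rw [Finset.mem_product, Finset.mem_powerset, Finset.mem_powerset]
      exact ⟨Finset.inter_subset_inter hT (Finset.Subset.refl W),
        Finset.sdiff_subset_sdiff hT (Finset.Subset.refl W)⟩
    · intro p hp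
      rw [Finset.mem_product, Finset.mem_powerset, Finset.mem_powerset] at hp
      rw [Finset.mem_powerset]
      exact Finset.union_subset (hp.1.trans Finset.inter_subset_left)
        (hp.2.trans (Finset.sdiff_subset))
    · intro T hT
      simpa [Finset.union_comm] using Finset.sdiff_union_inter T W
    · intro p hp
      rw [Finset.mem_product, Finset.mem_powerset, Finset.mem_powerset] at hp
      have h1 : ∀ a ∈ p.1, a ∈ W := fun a ha => (Finset.mem_inter.1 (hp.1 ha)).2
      have h2 : ∀ a ∈ p.2, a ∉ W := fun a ha => (Finset.mem_sdiff.1 (hp.2 ha)).2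
      have e1 : (p.1 ∪ p.2) ∩ W = p.1 := by
        ext a
        simp only [Finset.mem_inter, Finset.mem_union]
        constructor
        · rintro ⟨h | h, hW⟩
          · exact h
          · exact absurd hW (h2 a h)
        · intro h; exact ⟨Or.inl h, h1 a h⟩
      have e2 : (p.1 ∪ p.2) \ W = p.2 := by
        ext a
        simp only [Finset.mem_sdiff, Finset.mem_union]
        constructor
        · rintro ⟨h | h, hW⟩
          · exact absurd (h1 a h) hW
          · exact h
        · intro h; exact ⟨Or.inr h, h2 a h⟩
      rw [Prod.ext_iff]
      exact ⟨e1, e2⟩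
    · intro T hT
      rw [Finset.mem_powerset] at hT
      simp only []
      rw [Finset.card_inter_add_card_sdiff]
  rw [e1, Finset.sum_product]
  have hd : Disjoint (S ∩ W) (S \ W) := by
    refine Finset.disjoint_left.mpr fun a ha ha' => ?_
    exact (Finset.mem_sdiff.1 ha').2 (Finset.mem_inter.1 ha).2
  have e3 : ∀ T₁ ∈ (S ∩ W).powerset, (∑ T₂ ∈ (S \ W).powerset,
        (-1:ℝ) ^ (S.card - (T₁.card + T₂.card)) * PP μi T₁ f x)
      = ((-1:ℝ) ^ (S.card - T₁.card) * PP μi T₁ f x)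
        * ∑ T₂ ∈ (S \ W).powerset, (-1:ℝ) ^ T₂.card := by
    intro T₁ hT₁
    rw [Finset.mem_powerset] at hT₁
    rw [Finset.mul_sum]
    refine Finset.sum_congr rfl fun T₂ hT₂ => ?_
    rw [Finset.mem_powerset] at hT₂
    have hdisj : Disjoint T₁ T₂ := hd.mono hT₁ hT₂
    have hsub : T₁.card + T₂.card ≤ S.card := by
      rw [← Finset.card_union_of_disjoint hdisj]
      refine Finset.card_le_card (Finset.union_subset
        (hT₁.trans Finset.inter_subset_left) (hT₂.trans (Finset.sdiff_subset)))
    have hb : T₂.card ≤ S.card - T₁.card := by omega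
    have : S.card - (T₁.card + T₂.card) = (S.card - T₁.card) - T₂.card := by omega
    rw [this, neg_one_pow_sub hb]
    ring
  rw [Finset.sum_congr rfl e3, ← Finset.sum_mul, sum_powerset_neg_one_pow_card_real]
  by_cases hSW : S ⊆ W
  · have hempty : S \ W = ∅ := Finset.sdiff_eq_empty_iff_subset.mpr hSW
    rw [if_pos hSW, if_pos hempty, mul_one, Finset.inter_eq_left.mpr hSW]
    rfl
  · have hne : ¬ S \ W = ∅ := fun h => hSW (Finset.sdiff_eq_empty_iff_subset.mp h)
    rw [if_neg hne, if_neg hSW, mul_zero]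

lemma PP_ee (hsum : ∀ i, ∑ a, μi i a = 1) (W S : Finset (Fin k)) (f : (∀ i, V i) → ℝ)
    (x : ∀ i, V i) :
    PP μi W (ee μi S f) x = if S ⊆ W then ee μi S f x else 0 := by
  have h1 : PP μi W (ee μi S f) x
      = ∑ T ∈ S.powerset, (-1:ℝ) ^ (S.card - T.card) * PP μi (T ∩ W) f x := by
    rw [show ee μi S f
        = fun z => ∑ T ∈ S.powerset, (-1:ℝ)^(S.card - T.card) * PP μi T f z from rfl,
      PP_sum]
    refine Finset.sum_congr rfl fun T hT => ?_
    rw [PP_mul_const, PP_comp hsum, Finset.inter_comm]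
  rw [h1, mobius hsum]

lemma ee_PP (hsum : ∀ i, ∑ a, μi i a = 1) (S W : Finset (Fin k)) (f : (∀ i, V i) → ℝ)
    (x : ∀ i, V i) :
    ee μi S (PP μi W f) x = if S ⊆ W then ee μi S f x else 0 := by
  have h1 : ee μi S (PP μi W f) x
      = ∑ T ∈ S.powerset, (-1:ℝ) ^ (S.card - T.card) * PP μi (T ∩ W) f x := by
    refine Finset.sum_congr rfl fun T hT => ?_
    rw [PP_comp hsum]
  rw [h1, mobius hsum]

lemma ee_congr {S : Finset (Fin k)} {x y : ∀ i, V i} (h : ∀ i ∈ S, x i = y i)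
    (f : (∀ i, V i) → ℝ) : ee μi S f x = ee μi S f y :=
  Finset.sum_congr rfl fun T hT => by
    rw [Finset.mem_powerset] at hT
    rw [PP_congr (fun i hi => h i (hT hi))]

lemma alt_sum (S T' : Finset (Fin k)) (hST : S ⊆ T') :
    ∑ T ∈ T'.powerset.filter (fun T => S ⊆ T), (-1:ℝ)^(T'.card - T.card)
      = if S = T' then 1 else 0 := by
  have e1 : ∑ T ∈ T'.powerset.filter (fun T => S ⊆ T), (-1:ℝ)^(T'.card - T.card)
      = ∑ C ∈ (T' \ S).powerset, (-1:ℝ)^(T'.card - (S.card + C.card)) := by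
    refine Finset.sum_nbij' (i := fun T => T \ S) (j := fun C => S ∪ C) ?_ ?_ ?_ ?_ ?_
    · intro T hT
      rw [Finset.mem_filter, Finset.mem_powerset] at hT
      rw [Finset.mem_powerset]
      exact Finset.sdiff_subset_sdiff hT.1 (Finset.Subset.refl S)
    · intro C hC
      rw [Finset.mem_powerset] at hC
      rw [Finset.mem_filter, Finset.mem_powerset]
      exact ⟨Finset.union_subset hST (hC.trans Finset.sdiff_subset),
        Finset.subset_union_left⟩
    · intro T hT
      rw [Finset.mem_filter] at hT
      exact Finset.union_sdiff_of_subset hT.2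
    · intro C hC
      rw [Finset.mem_powerset] at hC
      have hdisj : Disjoint S C := Finset.disjoint_left.mpr fun a haS haC =>
        (Finset.mem_sdiff.1 (hC haC)).2 haS
      rw [Finset.union_sdiff_cancel_left hdisj]
    · intro T hT
      rw [Finset.mem_filter, Finset.mem_powerset] at hT
      have h1 : (T \ S).card = T.card - S.card := Finset.card_sdiff_of_subset hT.2
      have h2 : S.card ≤ T.card := Finset.card_le_card hT.2
      congr 1
      omega
  have e2 : ∀ C ∈ (T' \ S).powerset, (-1:ℝ)^(T'.card - (S.card + C.card))
      = (-1:ℝ)^((T' \ S).card) * (-1)^C.card := by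
    intro C hC
    rw [Finset.mem_powerset] at hC
    have hcs : S.card ≤ T'.card := Finset.card_le_card hST
    have hcC : C.card ≤ (T' \ S).card := Finset.card_le_card hC
    have hA : (T' \ S).card = T'.card - S.card := Finset.card_sdiff_of_subset hST
    have h3 : T'.card - (S.card + C.card) = (T' \ S).card - C.card := by omega
    rw [h3, neg_one_pow_sub hcC]
  rw [e1, Finset.sum_congr rfl e2, ← Finset.mul_sum, sum_powerset_neg_one_pow_card_real]
  by_cases h : T' ⊆ S
  · have hEq : S = T' := Finset.Subset.antisymm hST h
    have hem : T' \ S = ∅ := Finset.sdiff_eq_empty_iff_subset.mpr h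
    rw [if_pos hEq, hem]
    simp
  · have h1 : ¬ T' \ S = ∅ := fun hh => h (Finset.sdiff_eq_empty_iff_subset.mp hh)
    have h2 : ¬ S = T' := fun hh => h (hh ▸ Finset.Subset.refl _)
    rw [if_neg h1, if_neg h2, mul_zero]

lemma alt_sum' (T A : Finset (Fin k)) (hTA : T ⊆ A) :
    ∑ S ∈ A.powerset.filter (fun S => T ⊆ S), (-1:ℝ)^(S.card - T.card)
      = if A = T then 1 else 0 := by
  have e1 : ∑ S ∈ A.powerset.filter (fun S => T ⊆ S), (-1:ℝ)^(S.card - T.card)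
      = ∑ C ∈ (A \ T).powerset, (-1:ℝ)^(C.card) := by
    refine Finset.sum_nbij' (i := fun S => S \ T) (j := fun C => T ∪ C) ?_ ?_ ?_ ?_ ?_
    · intro S hS
      rw [Finset.mem_filter, Finset.mem_powerset] at hS
      rw [Finset.mem_powerset]
      exact Finset.sdiff_subset_sdiff hS.1 (Finset.Subset.refl T)
    · intro C hC
      rw [Finset.mem_powerset] at hC
      rw [Finset.mem_filter, Finset.mem_powerset]
      exact ⟨Finset.union_subset hTA (hC.trans Finset.sdiff_subset),
        Finset.subset_union_left⟩
    · intro S hS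
      rw [Finset.mem_filter] at hS
      exact Finset.union_sdiff_of_subset hS.2
    · intro C hC
      rw [Finset.mem_powerset] at hC
      have hdisj : Disjoint T C := Finset.disjoint_left.mpr fun a haT haC =>
        (Finset.mem_sdiff.1 (hC haC)).2 haT
      rw [Finset.union_sdiff_cancel_left hdisj]
    · intro S hS
      rw [Finset.mem_filter, Finset.mem_powerset] at hS
      congr 1
      exact (Finset.card_sdiff_of_subset hS.2).symm
  rw [e1, sum_powerset_neg_one_pow_card_real]
  have : A \ T = ∅ ↔ A = T := by
    rw [Finset.sdiff_eq_empty_iff_subset]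
    constructor
    · intro h; exact Finset.Subset.antisymm h hTA
    · intro h; exact h ▸ Finset.Subset.refl _
  split
  · rw [if_pos (this.mp (by assumption))]
  · rw [if_neg (fun hh => (by assumption : ¬ A \ T = ∅) (this.mpr hh))]

lemma ee_ee (hsum : ∀ i, ∑ a, μi i a = 1) (S T' : Finset (Fin k)) (f : (∀ i, V i) → ℝ)
    (x : ∀ i, V i) :
    ee μi T' (ee μi S f) x = if S = T' then ee μi S f x else 0 := by
  have h1 : ee μi T' (ee μi S f) x
      = ∑ T ∈ T'.powerset, (-1:ℝ)^(T'.card - T.card) * (if S ⊆ T then ee μi S f x else 0) := by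
    refine Finset.sum_congr rfl fun T hT => ?_
    rw [PP_ee hsum]
  by_cases hST : S ⊆ T'
  · have h3 : ∀ T ∈ T'.powerset,
        (-1:ℝ)^(T'.card - T.card) * (if S ⊆ T then ee μi S f x else 0)
        = if S ⊆ T then (-1:ℝ)^(T'.card - T.card) * ee μi S f x else 0 := by
      intro T _; split <;> simp
    rw [h1, Finset.sum_congr rfl h3, ← Finset.sum_filter, ← Finset.sum_mul,
      alt_sum S T' hST]
    split <;> simp
  · rw [h1, Finset.sum_eq_zero, if_neg]
    · rintro rfl; exact hST (Finset.Subset.refl S)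
    · intro T hT
      rw [Finset.mem_powerset] at hT
      rw [if_neg fun hs => hST (hs.trans hT), mul_zero]

lemma powerset_eq_filter (S : Finset (Fin k)) :
    S.powerset = (univ : Finset (Fin k)).powerset.filter (fun T => T ⊆ S) := by
  ext T; simp [Finset.mem_powerset, Finset.mem_filter, Finset.subset_univ]

lemma sum_ee (f : (∀ i, V i) → ℝ) (x : ∀ i, V i) :
    ∑ S ∈ (univ : Finset (Fin k)).powerset, ee μi S f x = f x := by
  unfold ee
  have h1 : ∀ S : Finset (Fin k), ∑ T ∈ S.powerset, (-1:ℝ)^(S.card-T.card) * PP μi T f x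
      = ∑ T ∈ (univ : Finset (Fin k)).powerset,
          if T ⊆ S then (-1:ℝ)^(S.card-T.card) * PP μi T f x else 0 := by
    intro S
    rw [powerset_eq_filter S, Finset.sum_filter]
  rw [Finset.sum_congr rfl fun S _ => h1 S, Finset.sum_comm]
  have h2 : ∀ T ∈ (univ : Finset (Fin k)).powerset,
      (∑ S ∈ (univ : Finset (Fin k)).powerset,
        if T ⊆ S then (-1:ℝ)^(S.card-T.card) * PP μi T f x else 0)
      = (if (univ : Finset (Fin k)) = T then 1 else 0) * PP μi T f x := by
    intro T hT
    rw [Finset.mem_powerset] at hT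
    have h3 : ∀ S ∈ (univ : Finset (Fin k)).powerset,
        (if T ⊆ S then (-1:ℝ)^(S.card-T.card) * PP μi T f x else 0)
        = (if T ⊆ S then (-1:ℝ)^(S.card-T.card) else 0) * PP μi T f x := by
      intro S _; split <;> simp
    rw [Finset.sum_congr rfl h3, ← Finset.sum_mul, ← Finset.sum_filter,
      alt_sum' T univ (Finset.subset_univ T)]
  rw [Finset.sum_congr rfl h2]
  have h4 : ∀ T ∈ (univ : Finset (Fin k)).powerset,
      (if (univ : Finset (Fin k)) = T then (1:ℝ) else 0) * PP μi T f x
      = if T = univ then PP μi univ f x else 0 := by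
    intro T _
    by_cases h : T = (univ : Finset (Fin k))
    · rw [if_pos h.symm, if_pos h, one_mul, h]
    · rw [if_neg (fun hh => h hh.symm), if_neg h, zero_mul]
  rw [Finset.sum_congr rfl h4, Finset.sum_ite_eq' _ (univ : Finset (Fin k))]
  rw [if_pos (Finset.mem_powerset_self _), PP_univ]

lemma mu_nonneg (hnn : ∀ i x, 0 ≤ μi i x) (x : ∀ i, V i) : 0 ≤ prodMeasure μi x :=
  Finset.prod_nonneg fun i _ => hnn i _

lemma ip_sum_left {ι : Type*} (s : Finset ι) (F : ι → (∀ i, V i) → ℝ) (g : (∀ i, V i) → ℝ) :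
    inner' (prodMeasure μi) (fun x => ∑ p ∈ s, F p x) g
      = ∑ p ∈ s, inner' (prodMeasure μi) (F p) g := by
  unfold inner'
  simp only [Finset.sum_mul, Finset.mul_sum]
  exact Finset.sum_comm

lemma ip_comm (f g : (∀ i, V i) → ℝ) :
    inner' (prodMeasure μi) f g = inner' (prodMeasure μi) g f := by
  unfold inner'; exact Finset.sum_congr rfl fun x _ => by ring

lemma ip_smul_left (c : ℝ) (f g : (∀ i, V i) → ℝ) :
    inner' (prodMeasure μi) (fun x => c * f x) g = c * inner' (prodMeasure μi) f g := by
  unfold inner'; rw [Finset.mul_sum]; exact Finset.sum_congr rfl fun x _ => by ring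

lemma ip_sub_left (f g h : (∀ i, V i) → ℝ) :
    inner' (prodMeasure μi) (fun x => f x - g x) h
      = inner' (prodMeasure μi) f h - inner' (prodMeasure μi) g h := by
  unfold inner'
  rw [← Finset.sum_sub_distrib]
  exact Finset.sum_congr rfl fun x _ => by ring

lemma ip_sub_right (f g h : (∀ i, V i) → ℝ) :
    inner' (prodMeasure μi) h (fun x => f x - g x)
      = inner' (prodMeasure μi) h f - inner' (prodMeasure μi) h g := by
  unfold inner'
  rw [← Finset.sum_sub_distrib]
  exact Finset.sum_congr rfl fun x _ => by ring

lemma ip_self_nonneg (hnn : ∀ i x, 0 ≤ μi i x) (f : (∀ i, V i) → ℝ) :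
    0 ≤ inner' (prodMeasure μi) f f :=
  Finset.sum_nonneg fun x _ => mul_nonneg (mu_nonneg hnn x) (mul_self_nonneg _)

lemma ip_nonneg (hnn : ∀ i x, 0 ≤ μi i x) {f g : (∀ i, V i) → ℝ}
    (hf : ∀ x, 0 ≤ f x) (hg : ∀ x, 0 ≤ g x) :
    0 ≤ inner' (prodMeasure μi) f g :=
  Finset.sum_nonneg fun x _ => mul_nonneg (mu_nonneg hnn x) (mul_nonneg (hf x) (hg x))

lemma ip_PP (W : Finset (Fin k)) (f g : (∀ i, V i) → ℝ) :
    inner' (prodMeasure μi) (PP μi W f) g = inner' (prodMeasure μi) f (PP μi W g) :=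
  PP_adjoint W f g

lemma ip_ee_left (hsum : ∀ i, ∑ a, μi i a = 1) (S : Finset (Fin k))
    (f g : (∀ i, V i) → ℝ) :
    inner' (prodMeasure μi) (ee μi S f) g = inner' (prodMeasure μi) f (ee μi S g) := by
  have L : inner' (prodMeasure μi) (ee μi S f) g
      = ∑ T ∈ S.powerset, (-1:ℝ)^(S.card - T.card)
          * inner' (prodMeasure μi) (PP μi T f) g := by
    rw [show ee μi S f
        = fun x => ∑ T ∈ S.powerset, (-1:ℝ)^(S.card-T.card) * PP μi T f x from rfl,
      ip_sum_left]
    exact Finset.sum_congr rfl fun T _ => ip_smul_left _ _ _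
  have R : inner' (prodMeasure μi) f (ee μi S g)
      = ∑ T ∈ S.powerset, (-1:ℝ)^(S.card - T.card)
          * inner' (prodMeasure μi) f (PP μi T g) := by
    rw [ip_comm, show ee μi S g
        = fun x => ∑ T ∈ S.powerset, (-1:ℝ)^(S.card-T.card) * PP μi T g x from rfl,
      ip_sum_left]
    refine Finset.sum_congr rfl fun T _ => ?_
    rw [ip_smul_left, ip_comm]
  rw [L, R]
  exact Finset.sum_congr rfl fun T _ => by rw [ip_PP]

lemma ee_idem (hsum : ∀ i, ∑ a, μi i a = 1) (S : Finset (Fin k)) (f : (∀ i, V i) → ℝ)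
    (x : ∀ i, V i) : ee μi S (ee μi S f) x = ee μi S f x := by
  rw [ee_ee hsum]; simp

lemma ip_ee_self_le (hnn : ∀ i x, 0 ≤ μi i x) (hsum : ∀ i, ∑ a, μi i a = 1)
    (S : Finset (Fin k)) (u : (∀ i, V i) → ℝ) :
    inner' (prodMeasure μi) (ee μi S u) (ee μi S u) ≤ inner' (prodMeasure μi) u u := by
  have key : inner' (prodMeasure μi) (ee μi S u) (ee μi S u)
      = inner' (prodMeasure μi) u (ee μi S u) := by
    rw [ip_ee_left hsum S u (ee μi S u)]
    congr 1
    funext x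
    exact ee_idem hsum S u x
  have hpos : 0 ≤ inner' (prodMeasure μi) (fun x => u x - ee μi S u x)
      (fun x => u x - ee μi S u x) := ip_self_nonneg hnn _
  have expand : inner' (prodMeasure μi) (fun x => u x - ee μi S u x)
      (fun x => u x - ee μi S u x)
      = inner' (prodMeasure μi) u u
        - inner' (prodMeasure μi) (ee μi S u) (ee μi S u) := by
    rw [ip_sub_left, ip_sub_right, ip_sub_right, ip_comm (ee μi S u) u, ← key]
    ring
  linarith [expand ▸ hpos]

lemma PP_congr_fun {W : Finset (Fin k)} {f g : (∀ i, V i) → ℝ} (h : ∀ z, f z = g z)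
    (x : ∀ i, V i) : PP μi W f x = PP μi W g x :=
  Finset.sum_congr rfl fun z _ => by rw [h z]

lemma cross_vanish_aux (hsum : ∀ i, ∑ a, μi i a = 1) {R T T' : Finset (Fin k)}
    {i0 : Fin k} (hiT : i0 ∈ T) (hiT' : i0 ∉ T') (hiR : i0 ∉ R)
    (f g : (∀ i, V i) → ℝ) (x : ∀ i, V i) :
    PP μi R (fun z => ee μi T f z * ee μi T' g z) x = 0 := by
  have h2 : ∀ y, PP μi (univ.erase i0) (fun z => ee μi T f z * ee μi T' g z) y = 0 := by
    intro y
    have hcomm : PP μi (univ.erase i0) (fun z => ee μi T f z * ee μi T' g z) y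
        = PP μi (univ.erase i0) (fun z => ee μi T' g z * ee μi T f z) y :=
      PP_congr_fun (fun z => mul_comm _ _) y
    have hj : ∀ (z : ∀ i, V i), (∀ j ∈ univ.erase i0, z j = y j)
        → ee μi T' g z = ee μi T' g y := by
      intro z hz
      exact ee_congr (fun j hjT' => hz j
        (Finset.mem_erase.2 ⟨fun he => hiT' (he ▸ hjT'), Finset.mem_univ j⟩)) g
    rw [hcomm, PP_mul_junta hj, PP_ee hsum, if_neg, mul_zero]
    intro hsub
    exact (Finset.mem_erase.1 (hsub hiT)).1 rfl
  have hRe : R ∩ univ.erase i0 = R := by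
    ext a
    simp only [Finset.mem_inter, Finset.mem_erase, Finset.mem_univ, and_true]
    constructor
    · exact fun h => h.1
    · intro h
      refine ⟨h, ?_⟩
      rintro rfl
      exact hiR h
  have h3 : PP μi R (fun z => ee μi T f z * ee μi T' g z) x
      = PP μi R (PP μi (univ.erase i0) (fun z => ee μi T f z * ee μi T' g z)) x := by
    rw [PP_comp hsum, hRe]
  rw [h3, PP_congr_fun h2, PP_zero]

lemma cross_vanish (hsum : ∀ i, ∑ a, μi i a = 1) {R T T' : Finset (Fin k)} (hne : T ≠ T')
    (hRT : R ⊆ T) (hRT' : R ⊆ T') (f g : (∀ i, V i) → ℝ) (x : ∀ i, V i) :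
    PP μi R (fun z => ee μi T f z * ee μi T' g z) x = 0 := by
  have hex : ∃ i0, (i0 ∈ T ∧ i0 ∉ T') ∨ (i0 ∈ T' ∧ i0 ∉ T) := by
    by_contra hcon
    push_neg at hcon
    apply hne
    ext a
    have h := hcon a
    tauto
  obtain ⟨i0, h | h⟩ := hex
  · exact cross_vanish_aux hsum h.1 h.2 (fun hiR => h.2 (hRT' hiR)) f g x
  · rw [PP_congr_fun (fun z => mul_comm (ee μi T f z) (ee μi T' g z))]
    exact cross_vanish_aux hsum h.1 h.2 (fun hiR => h.2 (hRT hiR)) g f x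

lemma ii_eq_sum (hsum : ∀ i, ∑ a, μi i a = 1) (R : Finset (Fin k)) (f : (∀ i, V i) → ℝ)
    (x : ∀ i, V i) :
    ii μi R f x = ∑ T ∈ univ.powerset.filter (fun T : Finset (Fin k) => R ⊆ T),
      PP μi R (fun z => (ee μi T f z)^2) x := by
  unfold ii ll
  have hsq : ∀ z : ∀ i, V i,
      (∑ T ∈ univ.powerset.filter (fun T : Finset (Fin k) => R ⊆ T), ee μi T f z)^2
      = ∑ T ∈ univ.powerset.filter (fun T : Finset (Fin k) => R ⊆ T),
          ∑ T' ∈ univ.powerset.filter (fun T' : Finset (Fin k) => R ⊆ T'),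
            ee μi T f z * ee μi T' f z := by
    intro z; rw [sq, Finset.sum_mul_sum]
  rw [PP_congr_fun hsq, PP_sum]
  refine Finset.sum_congr rfl fun T hT => ?_
  rw [Finset.mem_filter, Finset.mem_powerset] at hT
  rw [PP_sum (W := R) (s := univ.powerset.filter (fun T' : Finset (Fin k) => R ⊆ T'))
    (F := fun T' z => ee μi T f z * ee μi T' f z)]
  rw [Finset.sum_eq_single T]
  · exact PP_congr_fun (fun z => (sq (ee μi T f z)).symm) x
  · intro T' hT' hne
    rw [Finset.mem_filter, Finset.mem_powerset] at hT'
    exact cross_vanish hsum (Ne.symm hne) hT.2 hT'.2 f f x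
  · intro habs
    exact absurd (Finset.mem_filter.2 ⟨Finset.mem_powerset.2 (Finset.subset_univ T), hT.2⟩) habs

lemma ii_nonneg (hnn : ∀ i x, 0 ≤ μi i x) (R : Finset (Fin k)) (f : (∀ i, V i) → ℝ)
    (x : ∀ i, V i) : 0 ≤ ii μi R f x :=
  PP_nonneg hnn (fun z => sq_nonneg _) x

/-! ### Transfer between the original operators and the clean ones -/

lemma mui_pos (hnn : ∀ i x, 0 ≤ μi i x) {x : ∀ i, V i} (hx : 0 < prodMeasure μi x)
    (i : Fin k) : 0 < μi i (x i) := by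
  rcases lt_or_eq_of_le (hnn i (x i)) with h | h
  · exact h
  · exfalso
    have h0 : prodMeasure μi x = 0 := Finset.prod_eq_zero (Finset.mem_univ i) h.symm
    rw [h0] at hx
    exact lt_irrefl 0 hx

lemma marg_eq (hsum : ∀ i, ∑ a, μi i a = 1) (S : Finset (Fin k)) (x : ∀ i, V i) :
    marg (prodMeasure μi) S x = ∏ i ∈ S, μi i (x i) := by
  unfold marg prodMeasure
  have h : ∀ z : ∀ i, V i, (if ∀ i ∈ S, z i = x i then ∏ i, μi i (z i) else 0)
      = ∏ i, (if i ∈ S then (if z i = x i then μi i (z i) else 0) else μi i (z i)) := by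
    intro z
    by_cases hz : ∀ i ∈ S, z i = x i
    · rw [if_pos hz]
      refine Finset.prod_congr rfl fun i _ => ?_
      by_cases hiS : i ∈ S
      · rw [if_pos hiS, if_pos (hz i hiS)]
      · rw [if_neg hiS]
    · rw [if_neg hz]
      push_neg at hz
      obtain ⟨i, hiS, hne⟩ := hz
      symm
      refine Finset.prod_eq_zero (Finset.mem_univ i) ?_
      rw [if_pos hiS, if_neg hne]
  rw [Finset.sum_congr rfl fun z _ => h z,
    sum_pi_prod (g := fun i b => if i ∈ S then (if b = x i then μi i b else 0) else μi i b)]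
  have h2 : ∀ i : Fin k, (∑ b, if i ∈ S then (if b = x i then μi i b else 0) else μi i b)
      = (if i ∈ S then μi i (x i) else 1) := by
    intro i
    by_cases hiS : i ∈ S
    · simp only [hiS, if_true]
      rw [Finset.sum_ite_eq' univ (x i) (fun b => μi i b)]
      simp
    · simp only [hiS, if_false]
      exact hsum i
  rw [Finset.prod_congr rfl fun i _ => h2 i, Finset.prod_ite_mem, Finset.univ_inter]

lemma marg_pos (hnn : ∀ i x, 0 ≤ μi i x) (hsum : ∀ i, ∑ a, μi i a = 1)
    {S : Finset (Fin k)} {x : ∀ i, V i} (hx : 0 < prodMeasure μi x) :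
    0 < marg (prodMeasure μi) S x := by
  rw [marg_eq hsum]
  exact Finset.prod_pos fun i _ => mui_pos hnn hx i

lemma cond_eq_kk (hnn : ∀ i x, 0 ≤ μi i x) (hsum : ∀ i, ∑ a, μi i a = 1)
    {S : Finset (Fin k)} {x : ∀ i, V i} (hx : 0 < prodMeasure μi x) (z : ∀ i, V i) :
    cond (prodMeasure μi) S x z = kk μi S x z := by
  unfold cond
  by_cases hz : ∀ i ∈ S, z i = x i
  · rw [if_pos hz]
    have hm : marg (prodMeasure μi) S x ≠ 0 := ne_of_gt (marg_pos hnn hsum hx)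
    have key : prodMeasure μi z = kk μi S x z * marg (prodMeasure μi) S x := by
      rw [marg_eq hsum]
      have hS : ∏ i ∈ S, μi i (x i) = ∏ i : Fin k, (if i ∈ S then μi i (x i) else 1) := by
        rw [Finset.prod_ite_mem, Finset.univ_inter]
      rw [hS]
      unfold prodMeasure kk
      rw [← Finset.prod_mul_distrib]
      refine Finset.prod_congr rfl fun i _ => ?_
      by_cases hiS : i ∈ S
      · rw [if_pos hiS, if_pos hiS, if_pos (hz i hiS), one_mul, hz i hiS]
      · rw [if_neg hiS, if_neg hiS, mul_one]
    rw [key, mul_div_cancel_right₀ _ hm]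
  · rw [if_neg hz]
    exact (kk_eq_zero hz).symm

lemma Aop_eq_PP (hnn : ∀ i x, 0 ≤ μi i x) (hsum : ∀ i, ∑ a, μi i a = 1)
    {W : Finset (Fin k)} {x : ∀ i, V i} (hx : 0 < prodMeasure μi x) (f : (∀ i, V i) → ℝ) :
    Aop (prodMeasure μi) W f x = PP μi W f x :=
  Finset.sum_congr rfl fun z _ => by rw [cond_eq_kk hnn hsum hx]

lemma ES_eq_ee (hnn : ∀ i x, 0 ≤ μi i x) (hsum : ∀ i, ∑ a, μi i a = 1)
    {S : Finset (Fin k)} {x : ∀ i, V i} (hx : 0 < prodMeasure μi x) (f : (∀ i, V i) → ℝ) :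
    ES (prodMeasure μi) S f x = ee μi S f x :=
  Finset.sum_congr rfl fun T _ => by rw [Aop_eq_PP hnn hsum hx]

lemma kk_pos_mu_pos (hnn : ∀ i x, 0 ≤ μi i x) {T : Finset (Fin k)} {x z : ∀ i, V i}
    (hx : 0 < prodMeasure μi x) (hkk : kk μi T x z ≠ 0) : 0 < prodMeasure μi z := by
  have hfac : ∀ i, (if i ∈ T then (if z i = x i then (1:ℝ) else 0) else μi i (z i)) ≠ 0 := by
    intro i hzero
    exact hkk (Finset.prod_eq_zero (Finset.mem_univ i) hzero)
  unfold prodMeasure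
  refine Finset.prod_pos fun i _ => ?_
  by_cases hiT : i ∈ T
  · have h := hfac i
    rw [if_pos hiT] at h
    by_cases he : z i = x i
    · rw [he]; exact mui_pos hnn hx i
    · rw [if_neg he] at h; exact absurd rfl h
  · have h := hfac i
    rw [if_neg hiT] at h
    exact lt_of_le_of_ne (hnn i _) (Ne.symm h)

/-- The clean truncation `f^{≤ d}`. -/
noncomputable def trunc (μi : ∀ i, V i → ℝ) (d : ℕ) (f : (∀ i, V i) → ℝ)
    (x : ∀ i, V i) : ℝ :=
  ∑ S ∈ univ.powerset.filter (fun S : Finset (Fin k) => S.card ≤ d), ee μi S f x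

lemma ee_sum {ι : Type*} (S : Finset (Fin k)) (s : Finset ι) (F : ι → (∀ i, V i) → ℝ)
    (x : ∀ i, V i) :
    ee μi S (fun z => ∑ p ∈ s, F p z) x = ∑ p ∈ s, ee μi S (F p) x := by
  unfold ee
  have h : ∀ T ∈ S.powerset, (-1:ℝ)^(S.card - T.card)
        * PP μi T (fun z => ∑ p ∈ s, F p z) x
      = ∑ p ∈ s, (-1:ℝ)^(S.card - T.card) * PP μi T (F p) x := by
    intro T _
    rw [PP_sum, Finset.mul_sum]
  rw [Finset.sum_congr rfl h, Finset.sum_comm]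

lemma ee_trunc (hsum : ∀ i, ∑ a, μi i a = 1) (d : ℕ) (T' : Finset (Fin k))
    (f : (∀ i, V i) → ℝ) (x : ∀ i, V i) :
    ee μi T' (trunc μi d f) x = if T'.card ≤ d then ee μi T' f x else 0 := by
  have h0 : ee μi T' (trunc μi d f) x
      = ∑ S ∈ univ.powerset.filter (fun S : Finset (Fin k) => S.card ≤ d),
          ee μi T' (ee μi S f) x :=
    ee_sum T' _ _ x
  rw [h0, Finset.sum_congr rfl (fun S _ => ee_ee hsum S T' f x),
    Finset.sum_ite_eq' _ T' (fun S => ee μi S f x)]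
  have hmem : T' ∈ univ.powerset.filter (fun S : Finset (Fin k) => S.card ≤ d)
      ↔ T'.card ≤ d := by
    simp [Finset.mem_filter, Finset.mem_powerset, Finset.subset_univ]
  by_cases hc : T'.card ≤ d
  · rw [if_pos (hmem.mpr hc), if_pos hc]
  · rw [if_neg (fun hh => hc (hmem.mp hh)), if_neg hc]

lemma trunc_deg (hsum : ∀ i, ∑ a, μi i a = 1) (d : ℕ) (f : (∀ i, V i) → ℝ) :
    ∀ S : Finset (Fin k), d < S.card → ∀ x, ee μi S (trunc μi d f) x = 0 := by
  intro S hS x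
  rw [ee_trunc hsum, if_neg (by omega)]

lemma trunc_eq_on_support (hnn : ∀ i x, 0 ≤ μi i x) (hsum : ∀ i, ∑ a, μi i a = 1)
    {d : ℕ} {f : (∀ i, V i) → ℝ} (hdeg : DegLe (prodMeasure μi) d f)
    {x : ∀ i, V i} (hx : 0 < prodMeasure μi x) : trunc μi d f x = f x := by
  have h1 : f x = ∑ S ∈ (univ : Finset (Fin k)).powerset, ee μi S f x := (sum_ee f x).symm
  rw [h1]
  unfold trunc
  rw [← Finset.sum_filter_add_sum_filter_not ((univ : Finset (Fin k)).powerset)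
    (fun S : Finset (Fin k) => S.card ≤ d)]
  have h2 : ∑ S ∈ univ.powerset.filter (fun S : Finset (Fin k) => ¬ S.card ≤ d),
      ee μi S f x = 0 := by
    refine Finset.sum_eq_zero fun S hS => ?_
    rw [Finset.mem_filter] at hS
    rw [← ES_eq_ee hnn hsum hx f]
    exact hdeg S (by omega) x
  rw [h2, add_zero]

lemma Lap_eq_ll (hnn : ∀ i x, 0 ≤ μi i x) (hsum : ∀ i, ∑ a, μi i a = 1)
    {d : ℕ} {f : (∀ i, V i) → ℝ} (hdeg : DegLe (prodMeasure μi) d f)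
    {z : ∀ i, V i} (hz : 0 < prodMeasure μi z) (T : Finset (Fin k)) :
    Lap (prodMeasure μi) T f z = ll μi T (trunc μi d f) z := by
  unfold Lap ll
  refine Finset.sum_congr rfl fun T' _ => ?_
  rw [ES_eq_ee hnn hsum hz, ee_trunc hsum]
  by_cases hc : T'.card ≤ d
  · rw [if_pos hc]
  · rw [if_neg hc, ← ES_eq_ee hnn hsum hz]
    exact hdeg T' (by omega) z

lemma Inf_eq_ii (hnn : ∀ i x, 0 ≤ μi i x) (hsum : ∀ i, ∑ a, μi i a = 1)
    {d : ℕ} {f : (∀ i, V i) → ℝ} (hdeg : DegLe (prodMeasure μi) d f)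
    {x : ∀ i, V i} (hx : 0 < prodMeasure μi x) (T : Finset (Fin k)) :
    Inf (prodMeasure μi) T f x = ii μi T (trunc μi d f) x := by
  unfold Inf ii PP
  refine Finset.sum_congr rfl fun z _ => ?_
  rw [cond_eq_kk hnn hsum hx]
  dsimp only
  by_cases hkk : kk μi T x z = 0
  · rw [hkk, zero_mul, zero_mul]
  · have hz : 0 < prodMeasure μi z := kk_pos_mu_pos hnn hx hkk
    rw [Lap_eq_ll hnn hsum hdeg hz]

lemma norm4p4_trunc (hnn : ∀ i x, 0 ≤ μi i x) (hsum : ∀ i, ∑ a, μi i a = 1)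
    {d : ℕ} {f : (∀ i, V i) → ℝ} (hdeg : DegLe (prodMeasure μi) d f) :
    norm4p4 (prodMeasure μi) f = norm4p4 (prodMeasure μi) (trunc μi d f) := by
  unfold norm4p4
  refine Finset.sum_congr rfl fun x _ => ?_
  rcases lt_or_eq_of_le (mu_nonneg hnn x) with hx | hx
  · rw [trunc_eq_on_support hnn hsum hdeg hx]
  · rw [← hx, zero_mul, zero_mul]

lemma expect_congr_support (hnn : ∀ i x, 0 ≤ μi i x) {a b : (∀ i, V i) → ℝ}
    (h : ∀ x, 0 < prodMeasure μi x → a x = b x) :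
    expect (prodMeasure μi) a = expect (prodMeasure μi) b := by
  unfold expect
  refine Finset.sum_congr rfl fun x _ => ?_
  rcases lt_or_eq_of_le (mu_nonneg hnn x) with hx | hx
  · rw [h x hx]
  · rw [← hx, zero_mul, zero_mul]

/-! ### Ingredients for the main inequality -/

lemma ip_ee_self (hsum : ∀ i, ∑ a, μi i a = 1) (S : Finset (Fin k)) (u : (∀ i, V i) → ℝ) :
    inner' (prodMeasure μi) (ee μi S u) (ee μi S u)
      = inner' (prodMeasure μi) u (ee μi S u) := by
  rw [ip_ee_left hsum S u (ee μi S u)]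
  congr 1
  funext x
  exact ee_idem hsum S u x

lemma parseval (hsum : ∀ i, ∑ a, μi i a = 1) (h : (∀ i, V i) → ℝ) :
    inner' (prodMeasure μi) h h
      = ∑ S ∈ (univ : Finset (Fin k)).powerset,
          inner' (prodMeasure μi) (ee μi S h) (ee μi S h) := by
  have hdecomp : inner' (prodMeasure μi) h h
      = inner' (prodMeasure μi)
          (fun x => ∑ S ∈ (univ : Finset (Fin k)).powerset, ee μi S h x) h := by
    congr 1
    funext x
    exact (sum_ee h x).symm
  rw [hdecomp, ip_sum_left]
  refine Finset.sum_congr rfl fun S _ => ?_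
  rw [ip_comm, ← ip_ee_self hsum]

/-- The fiber-sum of Efron–Stein components with trace `U` on `S`. -/
noncomputable def FF (μi : ∀ i, V i → ℝ) (g : (∀ i, V i) → ℝ) (S U : Finset (Fin k)) :
    (∀ i, V i) → ℝ :=
  fun x => ∑ T ∈ (univ : Finset (Fin k)).powerset.filter (fun T => T ∩ S = U),
    ee μi T g x

lemma sum_FF (g : (∀ i, V i) → ℝ) (S : Finset (Fin k)) (x : ∀ i, V i) :
    ∑ U ∈ S.powerset, FF μi g S U x = g x := by
  unfold FF
  rw [Finset.sum_fiberwise_of_maps_to (g := fun T => T ∩ S)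
    (fun T _ => Finset.mem_powerset.2 Finset.inter_subset_right)
    (fun T => ee μi T g x)]
  exact sum_ee g x

lemma FF_junta (g : (∀ i, V i) → ℝ) {S U : Finset (Fin k)} {z y : ∀ i, V i}
    (hzy : ∀ i ∈ (univ \ S) ∪ U, z i = y i) :
    FF μi g S U z = FF μi g S U y := by
  unfold FF
  refine Finset.sum_congr rfl fun T hT => ?_
  rw [Finset.mem_filter] at hT
  refine ee_congr (fun j hj => hzy j ?_) g
  by_cases hjS : j ∈ S
  · have hmem : j ∈ T ∩ S := Finset.mem_inter.2 ⟨hj, hjS⟩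
    rw [hT.2] at hmem
    exact Finset.mem_union.2 (Or.inr hmem)
  · exact Finset.mem_union.2 (Or.inl (Finset.mem_sdiff.2 ⟨Finset.mem_univ j, hjS⟩))

lemma junta_superset {W W' : Finset (Fin k)} (hWW' : W ⊆ W') {z y : ∀ i, V i}
    (hzy : ∀ i ∈ W', z i = y i) : ∀ i ∈ W, z i = y i :=
  fun i hi => hzy i (hWW' hi)

lemma ee_FF_mul_zero (hsum : ∀ i, ∑ a, μi i a = 1) (g : (∀ i, V i) → ℝ)
    {S U₁ U₂ : Finset (Fin k)} (hU₁ : U₁ ⊆ S) (hU₂ : U₂ ⊆ S) (hne : U₁ ∪ U₂ ≠ S)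
    (x : ∀ i, V i) :
    ee μi S (fun z => FF μi g S U₁ z * FF μi g S U₂ z) x = 0 := by
  set W := (univ \ S) ∪ (U₁ ∪ U₂) with hW
  have hfix : ∀ y, PP μi W (fun z => FF μi g S U₁ z * FF μi g S U₂ z) y
      = FF μi g S U₁ y * FF μi g S U₂ y := by
    intro y
    refine PP_fix hsum (fun z hz => ?_)
    have h1 : FF μi g S U₁ z = FF μi g S U₁ y :=
      FF_junta g (junta_superset (Finset.union_subset_union (Finset.Subset.refl _)
        Finset.subset_union_left) hz)
    have h2 : FF μi g S U₂ z = FF μi g S U₂ y :=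
      FF_junta g (junta_superset (Finset.union_subset_union (Finset.Subset.refl _)
        Finset.subset_union_right) hz)
    rw [h1, h2]
  have hrw : ee μi S (fun z => FF μi g S U₁ z * FF μi g S U₂ z) x
      = ee μi S (PP μi W (fun z => FF μi g S U₁ z * FF μi g S U₂ z)) x := by
    congr 1
    funext y
    exact (hfix y).symm
  rw [hrw, ee_PP hsum, if_neg]
  intro hsub
  apply hne
  refine Finset.Subset.antisymm (Finset.union_subset hU₁ hU₂) ?_
  intro a haS
  rcases Finset.mem_union.1 (hsub haS) with h | h
  · exact absurd haS (Finset.mem_sdiff.1 h).2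
  · exact h

lemma ee_sq_decomp (hsum : ∀ i, ∑ a, μi i a = 1) (g : (∀ i, V i) → ℝ)
    (S : Finset (Fin k)) (hS : S ⊆ univ) (x : ∀ i, V i) :
    ee μi S (fun z => g z ^ 2) x
      = ∑ p ∈ ((univ : Finset (Fin k)).powerset ×ˢ (univ : Finset (Fin k)).powerset).filter
            (fun p => p.1 ∪ p.2 = S),
          ee μi S (fun z => FF μi g S p.1 z * FF μi g S p.2 z) x := by
  have hsq : ∀ z : ∀ i, V i, g z ^ 2
      = ∑ p ∈ S.powerset ×ˢ S.powerset, FF μi g S p.1 z * FF μi g S p.2 z := by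
    intro z
    rw [sq, ← sum_FF g S z, Finset.sum_mul_sum]
    rw [Finset.sum_product]
  have h1 : ee μi S (fun z => g z ^ 2) x
      = ∑ p ∈ S.powerset ×ˢ S.powerset,
          ee μi S (fun z => FF μi g S p.1 z * FF μi g S p.2 z) x := by
    rw [show (fun z => g z ^ 2)
        = fun z => ∑ p ∈ S.powerset ×ˢ S.powerset, FF μi g S p.1 z * FF μi g S p.2 z
        from funext hsq]
    exact ee_sum S _ _ x
  rw [h1]
  rw [← Finset.sum_filter_add_sum_filter_not (S.powerset ×ˢ S.powerset)
    (fun p => p.1 ∪ p.2 = S)]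
  have h2 : ∑ p ∈ (S.powerset ×ˢ S.powerset).filter (fun p => ¬ p.1 ∪ p.2 = S),
      ee μi S (fun z => FF μi g S p.1 z * FF μi g S p.2 z) x = 0 := by
    refine Finset.sum_eq_zero fun p hp => ?_
    rw [Finset.mem_filter, Finset.mem_product, Finset.mem_powerset, Finset.mem_powerset] at hp
    exact ee_FF_mul_zero hsum g hp.1.1 hp.1.2 hp.2 x
  rw [h2, add_zero]
  have h3 : (S.powerset ×ˢ S.powerset).filter (fun p => p.1 ∪ p.2 = S)
      = ((univ : Finset (Fin k)).powerset ×ˢ (univ : Finset (Fin k)).powerset).filter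
          (fun p => p.1 ∪ p.2 = S) := by
    ext p
    simp only [Finset.mem_filter, Finset.mem_product, Finset.mem_powerset]
    constructor
    · rintro ⟨⟨h1, h2⟩, h3⟩
      exact ⟨⟨Finset.subset_univ _, Finset.subset_univ _⟩, h3⟩
    · rintro ⟨⟨h1, h2⟩, h3⟩
      refine ⟨⟨?_, ?_⟩, h3⟩
      · rw [← h3]; exact Finset.subset_union_left
      · rw [← h3]; exact Finset.subset_union_right
  rw [h3]

lemma count_pairs (S : Finset (Fin k)) (η : ℝ) :
    ∑ p ∈ ((univ : Finset (Fin k)).powerset ×ˢ (univ : Finset (Fin k)).powerset).filter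
        (fun p => p.1 ∪ p.2 = S), η ^ (p.1.card + p.2.card)
      = (2*η + η^2) ^ S.card := by
  have h3 : ((univ : Finset (Fin k)).powerset ×ˢ (univ : Finset (Fin k)).powerset).filter
        (fun p => p.1 ∪ p.2 = S)
      = (S.powerset ×ˢ S.powerset).filter (fun p => p.1 ∪ p.2 = S) := by
    ext p
    simp only [Finset.mem_filter, Finset.mem_product, Finset.mem_powerset]
    constructor
    · rintro ⟨⟨h1, h2⟩, h3⟩
      refine ⟨⟨?_, ?_⟩, h3⟩
      · rw [← h3]; exact Finset.subset_union_left
      · rw [← h3]; exact Finset.subset_union_right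
    · rintro ⟨⟨h1, h2⟩, h3⟩
      exact ⟨⟨Finset.subset_univ _, Finset.subset_univ _⟩, h3⟩
  rw [h3, Finset.sum_filter, Finset.sum_product]
  -- ∑ U₁ ⊆ S, ∑ U₂ ⊆ S, if U₁ ∪ U₂ = S then η^(|U₁|+|U₂|) else 0
  have hinner : ∀ U₁ ∈ S.powerset,
      (∑ U₂ ∈ S.powerset, if U₁ ∪ U₂ = S then η ^ (U₁.card + U₂.card) else 0)
      = η ^ S.card * (η+1) ^ U₁.card := by
    intro U₁ hU₁
    rw [Finset.mem_powerset] at hU₁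
    -- U₂ with U₁ ∪ U₂ = S ↔ U₂ = (S \ U₁) ∪ C, C ⊆ U₁
    have e1 : (∑ U₂ ∈ S.powerset, if U₁ ∪ U₂ = S then η ^ (U₁.card + U₂.card) else 0)
        = ∑ U₂ ∈ S.powerset.filter (fun U₂ => U₁ ∪ U₂ = S), η ^ (U₁.card + U₂.card) := by
      rw [Finset.sum_filter]
    have e2 : ∑ U₂ ∈ S.powerset.filter (fun U₂ => U₁ ∪ U₂ = S), η ^ (U₁.card + U₂.card)
        = ∑ C ∈ U₁.powerset, η ^ (U₁.card + ((S \ U₁).card + C.card)) := by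
      refine Finset.sum_nbij' (i := fun U₂ => U₂ ∩ U₁) (j := fun C => (S \ U₁) ∪ C)
        ?_ ?_ ?_ ?_ ?_
      · intro U₂ hU₂
        rw [Finset.mem_powerset]
        exact Finset.inter_subset_right
      · intro C hC
        rw [Finset.mem_powerset] at hC
        rw [Finset.mem_filter, Finset.mem_powerset]
        constructor
        · exact Finset.union_subset Finset.sdiff_subset (hC.trans hU₁)
        · -- U₁ ∪ ((S \ U₁) ∪ C) = S
          refine Finset.Subset.antisymm ?_ ?_
          · refine Finset.union_subset hU₁ (Finset.union_subset Finset.sdiff_subset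
              (hC.trans hU₁))
          · intro a haS
            by_cases haU : a ∈ U₁
            · exact Finset.mem_union.2 (Or.inl haU)
            · exact Finset.mem_union.2 (Or.inr (Finset.mem_union.2 (Or.inl
                (Finset.mem_sdiff.2 ⟨haS, haU⟩))))
      · intro U₂ hU₂
        rw [Finset.mem_filter, Finset.mem_powerset] at hU₂
        -- (S \ U₁) ∪ (U₂ ∩ U₁) = U₂
        ext a
        simp only [Finset.mem_union, Finset.mem_sdiff, Finset.mem_inter]
        constructor
        · rintro (⟨haS, haU⟩ | ⟨h1, h2⟩)
          · -- a ∈ S, a ∉ U₁ ⇒ a ∈ U₂ since U₁ ∪ U₂ = S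
            have : a ∈ U₁ ∪ U₂ := hU₂.2 ▸ haS
            rcases Finset.mem_union.1 this with h | h
            · exact absurd h haU
            · exact h
          · exact h1
        · intro haU₂
          by_cases haU : a ∈ U₁
          · exact Or.inr ⟨haU₂, haU⟩
          · exact Or.inl ⟨hU₂.1 haU₂, haU⟩
      · intro C hC
        rw [Finset.mem_powerset] at hC
        -- ((S \ U₁) ∪ C) ∩ U₁ = C
        ext a
        simp only [Finset.mem_inter, Finset.mem_union, Finset.mem_sdiff]
        constructor
        · rintro ⟨⟨haS, haU⟩ | haC, haU₁⟩
          · exact absurd haU₁ haU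
          · exact haC
        · intro haC
          exact ⟨Or.inr haC, hC haC⟩
      · intro U₂ hU₂
        rw [Finset.mem_filter, Finset.mem_powerset] at hU₂
        congr 1
        -- U₂.card = (S\U₁).card + (U₂ ∩ U₁).card
        have hsub : S \ U₁ ⊆ U₂ := by
          intro a ha
          rw [Finset.mem_sdiff] at ha
          have : a ∈ U₁ ∪ U₂ := hU₂.2 ▸ ha.1
          rcases Finset.mem_union.1 this with h | h
          · exact absurd h ha.2
          · exact h
        have hdecomp : U₂ = (S \ U₁) ∪ (U₂ ∩ U₁) := by
          ext a
          simp only [Finset.mem_union, Finset.mem_sdiff, Finset.mem_inter]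
          constructor
          · intro haU₂
            by_cases haU : a ∈ U₁
            · exact Or.inr ⟨haU₂, haU⟩
            · exact Or.inl ⟨hU₂.1 haU₂, haU⟩
          · rintro (⟨haS, haU⟩ | ⟨h1, _⟩)
            · exact hsub (Finset.mem_sdiff.2 ⟨haS, haU⟩)
            · exact h1
        have hdisj : Disjoint (S \ U₁) (U₂ ∩ U₁) := by
          refine Finset.disjoint_left.mpr fun a h1 h2 => ?_
          exact (Finset.mem_sdiff.1 h1).2 (Finset.mem_inter.1 h2).2
        have hcard : U₂.card = (S \ U₁).card + (U₂ ∩ U₁).card := by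
          conv_lhs => rw [hdecomp]
          exact Finset.card_union_of_disjoint hdisj
        omega
    rw [e1, e2]
    have e3 : ∀ C ∈ U₁.powerset, η ^ (U₁.card + ((S \ U₁).card + C.card))
        = η ^ S.card * η ^ C.card := by
      intro C hC
      have : U₁.card + (S \ U₁).card = S.card := by
        rw [add_comm]
        exact Finset.card_sdiff_add_card_eq_card hU₁
      rw [← this]
      ring
    rw [Finset.sum_congr rfl e3, ← Finset.mul_sum, sum_powerset_pow_card]
  rw [Finset.sum_congr rfl hinner, ← Finset.mul_sum, sum_powerset_pow_card]
  -- η^|S| * (1+η+1)^|S| = (2η+η²)^|S|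
  rw [← mul_pow]
  congr 1
  ring

lemma weighted_cs {ι : Type*} (hnn : ∀ i x, 0 ≤ μi i x) (s : Finset ι)
    (v : ι → (∀ i, V i) → ℝ) (w : ι → ℝ) (hw : ∀ p ∈ s, 0 < w p) :
    inner' (prodMeasure μi) (fun x => ∑ p ∈ s, v p x) (fun x => ∑ p ∈ s, v p x)
      ≤ (∑ p ∈ s, w p) * ∑ p ∈ s, (w p)⁻¹ * inner' (prodMeasure μi) (v p) (v p) := by
  have hpt : ∀ x, (∑ p ∈ s, v p x)^2 ≤ (∑ p ∈ s, w p) * ∑ p ∈ s, (w p)⁻¹ * (v p x)^2 := by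
    intro x
    have hcs := Finset.sum_mul_sq_le_sq_mul_sq s (fun p => Real.sqrt (w p))
      (fun p => v p x / Real.sqrt (w p))
    have h1 : ∀ p ∈ s, Real.sqrt (w p) * (v p x / Real.sqrt (w p)) = v p x := by
      intro p hp
      rw [mul_comm, div_mul_cancel₀]
      exact ne_of_gt (Real.sqrt_pos.mpr (hw p hp))
    have h2 : ∀ p ∈ s, (Real.sqrt (w p))^2 = w p := fun p hp =>
      Real.sq_sqrt (le_of_lt (hw p hp))
    have h3 : ∀ p ∈ s, (v p x / Real.sqrt (w p))^2 = (w p)⁻¹ * (v p x)^2 := by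
      intro p hp
      rw [div_pow, h2 p hp, div_eq_mul_inv, mul_comm]
    rw [Finset.sum_congr rfl h1, Finset.sum_congr rfl h2, Finset.sum_congr rfl h3] at hcs
    exact hcs
  have hL : inner' (prodMeasure μi) (fun x => ∑ p ∈ s, v p x) (fun x => ∑ p ∈ s, v p x)
      = ∑ x, prodMeasure μi x * (∑ p ∈ s, v p x)^2 := by
    unfold inner'
    exact Finset.sum_congr rfl fun x _ => by ring
  have hR : (∑ p ∈ s, w p) * (∑ p ∈ s, (w p)⁻¹ * inner' (prodMeasure μi) (v p) (v p))
      = ∑ x, prodMeasure μi x * ((∑ p ∈ s, w p) * ∑ p ∈ s, (w p)⁻¹ * (v p x)^2) := by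
    have hswap : ∑ p ∈ s, (w p)⁻¹ * inner' (prodMeasure μi) (v p) (v p)
        = ∑ x, prodMeasure μi x * ∑ p ∈ s, (w p)⁻¹ * (v p x)^2 := by
      unfold inner'
      simp only [Finset.mul_sum]
      rw [Finset.sum_comm]
      exact Finset.sum_congr rfl fun x _ => Finset.sum_congr rfl fun p _ => by ring
    rw [hswap, Finset.mul_sum]
    exact Finset.sum_congr rfl fun x _ => by ring
  rw [hL, hR]
  exact Finset.sum_le_sum fun x _ =>
    mul_le_mul_of_nonneg_left (hpt x) (mu_nonneg hnn x)

lemma PP_sq_le (hnn : ∀ i x, 0 ≤ μi i x) (W : Finset (Fin k)) (a b : (∀ i, V i) → ℝ)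
    (x : ∀ i, V i) :
    (PP μi W (fun z => a z * b z) x)^2
      ≤ PP μi W (fun z => a z ^2) x * PP μi W (fun z => b z ^2) x := by
  unfold PP
  have h1 : ∀ z : ∀ i, V i, kk μi W x z * (a z * b z)
      = (Real.sqrt (kk μi W x z) * a z) * (Real.sqrt (kk μi W x z) * b z) := by
    intro z
    have hs : Real.sqrt (kk μi W x z) * Real.sqrt (kk μi W x z) = kk μi W x z :=
      Real.mul_self_sqrt (kk_nonneg hnn W x z)
    calc kk μi W x z * (a z * b z)
        = (Real.sqrt (kk μi W x z) * Real.sqrt (kk μi W x z)) * (a z * b z) := by rw [hs]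
      _ = (Real.sqrt (kk μi W x z) * a z) * (Real.sqrt (kk μi W x z) * b z) := by ring
  have h2 : ∀ z : ∀ i, V i, kk μi W x z * a z ^ 2
      = (Real.sqrt (kk μi W x z) * a z)^2 := by
    intro z
    rw [mul_pow, Real.sq_sqrt (kk_nonneg hnn W x z)]
  have h3 : ∀ z : ∀ i, V i, kk μi W x z * b z ^ 2
      = (Real.sqrt (kk μi W x z) * b z)^2 := by
    intro z
    rw [mul_pow, Real.sq_sqrt (kk_nonneg hnn W x z)]
  rw [Finset.sum_congr rfl fun z _ => h1 z, Finset.sum_congr rfl fun z _ => h2 z,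
    Finset.sum_congr rfl fun z _ => h3 z]
  exact Finset.sum_mul_sq_le_sq_mul_sq univ _ _

lemma ip_PP_PP (hsum : ∀ i, ∑ a, μi i a = 1) (U₁ U₂ : Finset (Fin k))
    (A B : (∀ i, V i) → ℝ) :
    inner' (prodMeasure μi) (PP μi U₁ A) (PP μi U₂ B)
      = inner' (prodMeasure μi) (PP μi (U₁ ∩ U₂) A) (PP μi (U₁ ∩ U₂) B) := by
  rw [ip_PP U₁ A (PP μi U₂ B), ip_PP (U₁ ∩ U₂) A (PP μi (U₁ ∩ U₂) B)]
  congr 1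
  funext y
  rw [PP_comp hsum, PP_comp hsum, Finset.inter_self]

lemma PP_junta_reduce (hsum : ∀ i, ∑ a, μi i a = 1) (g : (∀ i, V i) → ℝ)
    {S U : Finset (Fin k)} (hU : U ⊆ S) (y : ∀ i, V i) :
    PP μi S (fun z => FF μi g S U z ^ 2) y = PP μi U (fun z => FF μi g S U z ^ 2) y := by
  set W := (univ \ S) ∪ U with hW
  have hfix : ∀ y', PP μi W (fun z => FF μi g S U z ^ 2) y' = FF μi g S U y' ^ 2 := by
    intro y'
    refine PP_fix hsum (fun z hz => ?_)
    rw [FF_junta g hz]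
  have hSW : S ∩ W = U := by
    ext a
    simp only [hW, Finset.mem_inter, Finset.mem_union, Finset.mem_sdiff, Finset.mem_univ,
      true_and]
    constructor
    · rintro ⟨haS, h | h⟩
      · exact absurd haS h
      · exact h
    · intro h
      exact ⟨hU h, Or.inr h⟩
  calc PP μi S (fun z => FF μi g S U z ^ 2) y
      = PP μi S (PP μi W (fun z => FF μi g S U z ^ 2)) y := by
        congr 1
        funext y'
        exact (hfix y').symm
    _ = PP μi (S ∩ W) (fun z => FF μi g S U z ^ 2) y := PP_comp hsum _ _ _ _
    _ = PP μi U (fun z => FF μi g S U z ^ 2) y := by rw [hSW]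

lemma pair_bound (hnn : ∀ i x, 0 ≤ μi i x) (hsum : ∀ i, ∑ a, μi i a = 1)
    (g : (∀ i, V i) → ℝ) {S U₁ U₂ : Finset (Fin k)} (hU₁ : U₁ ⊆ S) (hU₂ : U₂ ⊆ S) :
    inner' (prodMeasure μi) (ee μi S (fun z => FF μi g S U₁ z * FF μi g S U₂ z))
        (ee μi S (fun z => FF μi g S U₁ z * FF μi g S U₂ z))
      ≤ inner' (prodMeasure μi) (PP μi (U₁ ∩ U₂) (fun z => FF μi g S U₁ z ^ 2))
          (PP μi (U₁ ∩ U₂) (fun z => FF μi g S U₂ z ^ 2)) := by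
  set u : (∀ i, V i) → ℝ := fun z => FF μi g S U₁ z * FF μi g S U₂ z with hu
  have step1 : inner' (prodMeasure μi) (ee μi S u) (ee μi S u)
      ≤ inner' (prodMeasure μi) (PP μi S u) (PP μi S u) := by
    have hrw : ee μi S u = ee μi S (PP μi S u) := by
      funext y
      rw [ee_PP hsum, if_pos (Finset.Subset.refl S)]
    rw [hrw]
    exact ip_ee_self_le hnn hsum S (PP μi S u)
  have step2 : inner' (prodMeasure μi) (PP μi S u) (PP μi S u)
      ≤ inner' (prodMeasure μi) (PP μi S (fun z => FF μi g S U₁ z ^ 2))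
          (PP μi S (fun z => FF μi g S U₂ z ^ 2)) := by
    unfold inner'
    refine Finset.sum_le_sum fun x _ => ?_
    refine mul_le_mul_of_nonneg_left ?_ (mu_nonneg hnn x)
    have h := PP_sq_le hnn S (FF μi g S U₁) (FF μi g S U₂) x
    calc PP μi S u x * PP μi S u x = (PP μi S u x)^2 := by ring
      _ ≤ _ := h
  have step3 : inner' (prodMeasure μi) (PP μi S (fun z => FF μi g S U₁ z ^ 2))
      (PP μi S (fun z => FF μi g S U₂ z ^ 2))
      = inner' (prodMeasure μi) (PP μi (U₁ ∩ U₂) (fun z => FF μi g S U₁ z ^ 2))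
          (PP μi (U₁ ∩ U₂) (fun z => FF μi g S U₂ z ^ 2)) := by
    have hA : PP μi S (fun z => FF μi g S U₁ z ^ 2)
        = PP μi U₁ (fun z => FF μi g S U₁ z ^ 2) := by
      funext y; exact PP_junta_reduce hsum g hU₁ y
    have hB : PP μi S (fun z => FF μi g S U₂ z ^ 2)
        = PP μi U₂ (fun z => FF μi g S U₂ z ^ 2) := by
      funext y; exact PP_junta_reduce hsum g hU₂ y
    rw [hA, hB]
    exact ip_PP_PP hsum U₁ U₂ _ _
  calc inner' (prodMeasure μi) (ee μi S u) (ee μi S u)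
      ≤ inner' (prodMeasure μi) (PP μi S u) (PP μi S u) := step1
    _ ≤ _ := step2.trans (le_of_eq step3)

lemma PP_FF_sq (hsum : ∀ i, ∑ a, μi i a = 1) (d : ℕ) (g : (∀ i, V i) → ℝ)
    (hg : ∀ S : Finset (Fin k), d < S.card → ∀ x, ee μi S g x = 0)
    {S U R : Finset (Fin k)} (hR : R ⊆ U) (x : ∀ i, V i) :
    PP μi R (fun z => FF μi g S U z ^ 2) x
      = ∑ T ∈ (univ : Finset (Fin k)).powerset.filter
            (fun T => T ∩ S = U ∧ T.card ≤ d),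
          PP μi R (fun z => (ee μi T g z)^2) x := by
  have hsq : ∀ z : ∀ i, V i, FF μi g S U z ^ 2
      = ∑ T ∈ (univ : Finset (Fin k)).powerset.filter (fun T => T ∩ S = U),
          ∑ T' ∈ (univ : Finset (Fin k)).powerset.filter (fun T' => T' ∩ S = U),
            ee μi T g z * ee μi T' g z := by
    intro z
    rw [sq]
    unfold FF
    rw [Finset.sum_mul_sum]
  rw [PP_congr_fun hsq, PP_sum]
  have hdiag : ∀ T ∈ (univ : Finset (Fin k)).powerset.filter (fun T => T ∩ S = U),
      PP μi R (fun z => ∑ T' ∈ (univ : Finset (Fin k)).powerset.filter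
          (fun T' => T' ∩ S = U), ee μi T g z * ee μi T' g z) x
      = PP μi R (fun z => (ee μi T g z)^2) x := by
    intro T hT
    rw [Finset.mem_filter] at hT
    have hRT : R ⊆ T := hR.trans (hT.2 ▸ Finset.inter_subset_left)
    rw [PP_sum (W := R)
      (s := (univ : Finset (Fin k)).powerset.filter (fun T' => T' ∩ S = U))
      (F := fun T' z => ee μi T g z * ee μi T' g z)]
    rw [Finset.sum_eq_single T]
    · exact PP_congr_fun (fun z => (sq (ee μi T g z)).symm) x
    · intro T' hT' hne
      rw [Finset.mem_filter] at hT'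
      have hRT' : R ⊆ T' := hR.trans (hT'.2 ▸ Finset.inter_subset_left)
      exact cross_vanish hsum (Ne.symm hne) hRT hRT' g g x
    · intro habs
      exact absurd (show T ∈ Finset.filter (fun T' => T' ∩ S = U) Finset.univ.powerset from
        Finset.mem_filter.2 ⟨Finset.mem_powerset.2 (Finset.subset_univ T), hT.2⟩) habs
  rw [Finset.sum_congr rfl hdiag]
  symm
  refine Finset.sum_subset ?_ ?_
  · intro T hT
    rw [Finset.mem_filter] at hT ⊢
    exact ⟨hT.1, hT.2.1⟩
  · intro T hT hT'
    rw [Finset.mem_filter] at hT hT'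
    have hcard : d < T.card := by
      by_contra hc
      exact hT' ⟨hT.1, hT.2, by omega⟩
    have hzero : ∀ z, (ee μi T g z)^2 = (0:ℝ) := by
      intro z
      rw [hg T hcard z]
      ring
    rw [PP_congr_fun hzero, PP_zero]

lemma ii_eq_sum_card (hsum : ∀ i, ∑ a, μi i a = 1) (d : ℕ) (g : (∀ i, V i) → ℝ)
    (hg : ∀ S : Finset (Fin k), d < S.card → ∀ x, ee μi S g x = 0)
    (R : Finset (Fin k)) (x : ∀ i, V i) :
    ii μi R g x = ∑ T ∈ (univ : Finset (Fin k)).powerset.filter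
        (fun T => R ⊆ T ∧ T.card ≤ d),
      PP μi R (fun z => (ee μi T g z)^2) x := by
  rw [ii_eq_sum hsum]
  symm
  refine Finset.sum_subset ?_ ?_
  · intro T hT
    rw [Finset.mem_filter] at hT ⊢
    exact ⟨hT.1, hT.2.1⟩
  · intro T hT hT'
    rw [Finset.mem_filter] at hT hT'
    have hcard : d < T.card := by
      by_contra hc
      exact hT' ⟨hT.1, hT.2, by omega⟩
    have hzero : ∀ z, (ee μi T g z)^2 = (0:ℝ) := by
      intro z
      rw [hg T hcard z]
      ring
    rw [PP_congr_fun hzero, PP_zero]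

lemma ip_sum_right {ι : Type*} (s : Finset ι) (F : ι → (∀ i, V i) → ℝ)
    (g : (∀ i, V i) → ℝ) :
    inner' (prodMeasure μi) g (fun x => ∑ p ∈ s, F p x)
      = ∑ p ∈ s, inner' (prodMeasure μi) g (F p) := by
  rw [ip_comm, ip_sum_left]
  exact Finset.sum_congr rfl fun p _ => ip_comm _ _

/-! ### The coefficient bound -/

lemma coeff_value {η : ℝ} (hη : 0 < η) {r a b u : ℕ} (hu : u + r = a + b)
    (hra : r ≤ a) (hrb : r ≤ b) :
    (2*η + η^2)^u * (η^(a+b))⁻¹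
      = ((2+η)/η)^r * ((2+η)^(a-r) * (2+η)^(b-r)) := by
  have hy : (2*η + η^2) = η * (2+η) := by ring
  have hηne : η ≠ 0 := ne_of_gt hη
  have hru : r ≤ u := by omega
  rw [hy, mul_pow, div_pow, ← hu]
  have h1 : a - r + (b - r) = u - r := by omega
  have h2 : (2+η)^(a-r) * (2+η)^(b-r) = (2+η)^(u-r) := by rw [← pow_add, h1]
  rw [h2]
  have h3 : η^(u+r) = η^u * η^r := pow_add η u r
  have h4 : (2+η)^u = (2+η)^r * (2+η)^(u-r) := by
    rw [← pow_add]
    congr 1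
    omega
  rw [h3, h4]
  have h5 : η^u ≠ 0 := pow_ne_zero _ hηne
  have h6 : η^r ≠ 0 := pow_ne_zero _ hηne
  field_simp

lemma coeff_bound (d : ℕ) {η : ℝ} (hη : 0 < η) {R T₁ T₂ : Finset (Fin k)}
    (hRT₁ : R ⊆ T₁) (hT₁d : T₁.card ≤ d) (hRT₂ : R ⊆ T₂) (hT₂d : T₂.card ≤ d) :
    ∑ p ∈ ((univ : Finset (Fin k)).powerset ×ˢ (univ : Finset (Fin k)).powerset).filter
        (fun p => p.1 ∩ p.2 = R ∧ T₁ ∩ (p.1 ∪ p.2) = p.1 ∧ T₂ ∩ (p.1 ∪ p.2) = p.2),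
      (2*η + η^2) ^ (p.1 ∪ p.2).card * (η ^ (p.1.card + p.2.card))⁻¹
      ≤ ((2+η)/η) ^ R.card * (3+η) ^ (2*(d - R.card)) := by
  set fil := ((univ : Finset (Fin k)).powerset ×ˢ (univ : Finset (Fin k)).powerset).filter
      (fun p => p.1 ∩ p.2 = R ∧ T₁ ∩ (p.1 ∪ p.2) = p.1 ∧ T₂ ∩ (p.1 ∪ p.2) = p.2) with hfil
  have hmem : ∀ p ∈ fil, p.1 ∩ p.2 = R ∧ T₁ ∩ (p.1 ∪ p.2) = p.1 ∧ T₂ ∩ (p.1 ∪ p.2) = p.2 := by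
    intro p hp
    rw [hfil, Finset.mem_filter] at hp
    exact hp.2
  have hfacts : ∀ p ∈ fil, R ⊆ p.1 ∧ R ⊆ p.2 ∧ p.1 ⊆ T₁ ∧ p.2 ⊆ T₂ := by
    intro p hp
    obtain ⟨h1, h2, h3⟩ := hmem p hp
    refine ⟨?_, ?_, ?_, ?_⟩
    · rw [← h1]; exact Finset.inter_subset_left
    · rw [← h1]; exact Finset.inter_subset_right
    · rw [← h2]; exact Finset.inter_subset_left
    · rw [← h3]; exact Finset.inter_subset_left
  -- value identity
  have hval : ∀ p ∈ fil,
      (2*η + η^2) ^ (p.1 ∪ p.2).card * (η ^ (p.1.card + p.2.card))⁻¹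
      = ((2+η)/η) ^ R.card
          * ((2+η) ^ ((p.1 \ R).card) * (2+η) ^ ((p.2 \ R).card)) := by
    intro p hp
    obtain ⟨hR1, hR2, _, _⟩ := hfacts p hp
    obtain ⟨h1, _, _⟩ := hmem p hp
    have hcard1 : (p.1 \ R).card = p.1.card - R.card := Finset.card_sdiff_of_subset hR1
    have hcard2 : (p.2 \ R).card = p.2.card - R.card := Finset.card_sdiff_of_subset hR2
    have hu : (p.1 ∪ p.2).card + R.card = p.1.card + p.2.card := by
      rw [← h1]
      exact Finset.card_union_add_card_inter p.1 p.2
    have hra : R.card ≤ p.1.card := Finset.card_le_card hR1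
    have hrb : R.card ≤ p.2.card := Finset.card_le_card hR2
    rw [hcard1, hcard2]
    exact coeff_value hη hu hra hrb
  rw [Finset.sum_congr rfl hval]
  -- inject into powerset pairs
  set e : Finset (Fin k) × Finset (Fin k) → Finset (Fin k) × Finset (Fin k) :=
    fun p => (p.1 \ R, p.2 \ R) with he
  have himage : ∀ p ∈ fil, e p ∈ (T₁ \ T₂).powerset ×ˢ (T₂ \ T₁).powerset := by
    intro p hp
    obtain ⟨hR1, hR2, hpT₁, hpT₂⟩ := hfacts p hp
    obtain ⟨h1, h2, h3⟩ := hmem p hp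
    rw [Finset.mem_product, Finset.mem_powerset, Finset.mem_powerset]
    constructor
    · intro a ha
      rw [Finset.mem_sdiff] at ha ⊢
      refine ⟨hpT₁ ha.1, fun haT₂ => ?_⟩
      have haS : a ∈ p.1 ∪ p.2 := Finset.mem_union.2 (Or.inl ha.1)
      have : a ∈ p.2 := by
        rw [← h3]; exact Finset.mem_inter.2 ⟨haT₂, haS⟩
      exact ha.2 (by rw [← h1]; exact Finset.mem_inter.2 ⟨ha.1, this⟩)
    · intro a ha
      rw [Finset.mem_sdiff] at ha ⊢
      refine ⟨hpT₂ ha.1, fun haT₁ => ?_⟩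
      have haS : a ∈ p.1 ∪ p.2 := Finset.mem_union.2 (Or.inr ha.1)
      have : a ∈ p.1 := by
        rw [← h2]; exact Finset.mem_inter.2 ⟨haT₁, haS⟩
      exact ha.2 (by rw [← h1]; exact Finset.mem_inter.2 ⟨this, ha.1⟩)
  have hinj : Set.InjOn e fil := by
    intro p hp p' hp' heq
    have hfp := hfacts p (by simpa using hp)
    have hfp' := hfacts p' (by simpa using hp')
    have e1 : p.1 \ R = p'.1 \ R := congrArg Prod.fst heq
    have e2 : p.2 \ R = p'.2 \ R := congrArg Prod.snd heq
    have g1 : p.1 = p'.1 := by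
      have u1 : R ∪ (p.1 \ R) = p.1 := Finset.union_sdiff_of_subset hfp.1
      have u2 : R ∪ (p'.1 \ R) = p'.1 := Finset.union_sdiff_of_subset hfp'.1
      rw [← u1, ← u2, e1]
    have g2 : p.2 = p'.2 := by
      have u1 : R ∪ (p.2 \ R) = p.2 := Finset.union_sdiff_of_subset hfp.2.1
      have u2 : R ∪ (p'.2 \ R) = p'.2 := Finset.union_sdiff_of_subset hfp'.2.1
      rw [← u1, ← u2, e2]
    exact Prod.ext g1 g2
  have himg : ∑ p ∈ fil, ((2+η)/η) ^ R.card
      * ((2+η) ^ ((p.1 \ R).card) * (2+η) ^ ((p.2 \ R).card))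
      = ∑ q ∈ fil.image e, ((2+η)/η) ^ R.card
          * ((2+η) ^ (q.1.card) * (2+η) ^ (q.2.card)) := by
    rw [Finset.sum_image (fun p hp p' hp' heq => hinj hp hp' heq)]
  rw [himg]
  have h2η : (0:ℝ) ≤ 2 + η := by linarith
  have h3η : (1:ℝ) ≤ 3 + η := by linarith
  have hcoef : (0:ℝ) ≤ ((2+η)/η) ^ R.card :=
    pow_nonneg (div_nonneg (by linarith) (le_of_lt hη)) _
  have hsub : ∑ q ∈ fil.image e, ((2+η)/η) ^ R.card
        * ((2+η) ^ (q.1.card) * (2+η) ^ (q.2.card))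
      ≤ ∑ q ∈ (T₁ \ T₂).powerset ×ˢ (T₂ \ T₁).powerset, ((2+η)/η) ^ R.card
          * ((2+η) ^ (q.1.card) * (2+η) ^ (q.2.card)) := by
    refine Finset.sum_le_sum_of_subset_of_nonneg ?_ ?_
    · intro q hq
      rw [Finset.mem_image] at hq
      obtain ⟨p, hp, rfl⟩ := hq
      exact himage p hp
    · intro q _ _
      exact mul_nonneg hcoef (mul_nonneg (pow_nonneg h2η _) (pow_nonneg h2η _))
  refine hsub.trans ?_
  have h23 : (2+η) + 1 = 3 + η := by ring
  have heval : ∑ q ∈ (T₁ \ T₂).powerset ×ˢ (T₂ \ T₁).powerset, ((2+η)/η) ^ R.card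
      * ((2+η) ^ (q.1.card) * (2+η) ^ (q.2.card))
      = ((2+η)/η) ^ R.card * ((3+η) ^ ((T₁ \ T₂).card) * (3+η) ^ ((T₂ \ T₁).card)) := by
    rw [Finset.sum_product]
    have hin : ∀ A ∈ (T₁ \ T₂).powerset,
        (∑ B ∈ (T₂ \ T₁).powerset, ((2+η)/η) ^ R.card
          * ((2+η) ^ (A.card) * (2+η) ^ (B.card)))
        = (((2+η)/η) ^ R.card * (2+η) ^ A.card) * (3+η) ^ ((T₂ \ T₁).card) := by
      intro A _
      have e1 : ∀ B ∈ (T₂ \ T₁).powerset, ((2+η)/η) ^ R.card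
            * ((2+η) ^ (A.card) * (2+η) ^ (B.card))
          = (((2+η)/η) ^ R.card * (2+η) ^ A.card) * (2+η) ^ B.card := by
        intro B _; ring
      rw [Finset.sum_congr rfl e1, ← Finset.mul_sum, sum_powerset_pow_card, h23]
    rw [Finset.sum_congr rfl hin, ← Finset.sum_mul]
    have e2 : ∀ A ∈ (T₁ \ T₂).powerset, ((2+η)/η) ^ R.card * (2+η) ^ A.card
        = ((2+η)/η) ^ R.card * (2+η) ^ A.card := fun A _ => rfl
    rw [← Finset.mul_sum, sum_powerset_pow_card, h23]
    ring
  rw [heval]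
  have h3ηnn : (0:ℝ) ≤ 3 + η := by linarith
  have hc1 : (T₁ \ T₂).card ≤ d - R.card := by
    have hsub1 : T₁ \ T₂ ⊆ T₁ \ R := Finset.sdiff_subset_sdiff (Finset.Subset.refl T₁) hRT₂
    have := Finset.card_le_card hsub1
    have h2 : (T₁ \ R).card = T₁.card - R.card := Finset.card_sdiff_of_subset hRT₁
    have h3 : R.card ≤ T₁.card := Finset.card_le_card hRT₁
    omega
  have hc2 : (T₂ \ T₁).card ≤ d - R.card := by
    have hsub1 : T₂ \ T₁ ⊆ T₂ \ R := Finset.sdiff_subset_sdiff (Finset.Subset.refl T₂) hRT₁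
    have := Finset.card_le_card hsub1
    have h2 : (T₂ \ R).card = T₂.card - R.card := Finset.card_sdiff_of_subset hRT₂
    have h3 : R.card ≤ T₂.card := Finset.card_le_card hRT₂
    omega
  have hp1 : (3+η) ^ ((T₁ \ T₂).card) ≤ (3+η) ^ (d - R.card) :=
    pow_le_pow_right₀ h3η hc1
  have hp2 : (3+η) ^ ((T₂ \ T₁).card) ≤ (3+η) ^ (d - R.card) :=
    pow_le_pow_right₀ h3η hc2
  have hmul : (3+η) ^ ((T₁ \ T₂).card) * (3+η) ^ ((T₂ \ T₁).card)
      ≤ (3+η) ^ (2*(d - R.card)) := by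
    have : (3+η) ^ (d - R.card) * (3+η) ^ (d - R.card) = (3+η) ^ (2*(d - R.card)) := by
      rw [← pow_add]
      congr 1
      omega
    calc (3+η) ^ ((T₁ \ T₂).card) * (3+η) ^ ((T₂ \ T₁).card)
        ≤ (3+η) ^ (d - R.card) * (3+η) ^ (d - R.card) :=
          mul_le_mul hp1 hp2 (pow_nonneg h3ηnn _) (pow_nonneg h3ηnn _)
      _ = _ := this
  exact mul_le_mul_of_nonneg_left hmul hcoef

/-- `qq R T = P_R ((f^{=T})²)`. -/
noncomputable def qq (μi : ∀ i, V i → ℝ) (g : (∀ i, V i) → ℝ) (R T : Finset (Fin k)) :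
    (∀ i, V i) → ℝ :=
  PP μi R (fun z => (ee μi T g z)^2)

lemma qq_nonneg (hnn : ∀ i x, 0 ≤ μi i x) (g : (∀ i, V i) → ℝ) (R T : Finset (Fin k))
    (x : ∀ i, V i) : 0 ≤ qq μi g R T x :=
  PP_nonneg hnn (fun z => sq_nonneg _) x

lemma perP_bound (hnn : ∀ i x, 0 ≤ μi i x) (hsum : ∀ i, ∑ a, μi i a = 1) (d : ℕ)
    (g : (∀ i, V i) → ℝ) (hg : ∀ S : Finset (Fin k), d < S.card → ∀ x, ee μi S g x = 0)
    {S U₁ U₂ : Finset (Fin k)} (hU₁ : U₁ ⊆ S) (hU₂ : U₂ ⊆ S) :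
    inner' (prodMeasure μi) (ee μi S (fun z => FF μi g S U₁ z * FF μi g S U₂ z))
        (ee μi S (fun z => FF μi g S U₁ z * FF μi g S U₂ z))
      ≤ ∑ T₁ ∈ (univ : Finset (Fin k)).powerset.filter
            (fun T => T ∩ S = U₁ ∧ T.card ≤ d),
          ∑ T₂ ∈ (univ : Finset (Fin k)).powerset.filter
              (fun T => T ∩ S = U₂ ∧ T.card ≤ d),
            inner' (prodMeasure μi) (qq μi g (U₁ ∩ U₂) T₁) (qq μi g (U₁ ∩ U₂) T₂) := by
  refine (pair_bound hnn hsum g hU₁ hU₂).trans (le_of_eq ?_)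
  have hA : PP μi (U₁ ∩ U₂) (fun z => FF μi g S U₁ z ^ 2)
      = fun x => ∑ T₁ ∈ (univ : Finset (Fin k)).powerset.filter
          (fun T => T ∩ S = U₁ ∧ T.card ≤ d), qq μi g (U₁ ∩ U₂) T₁ x :=
    funext (PP_FF_sq hsum d g hg Finset.inter_subset_left)
  have hB : PP μi (U₁ ∩ U₂) (fun z => FF μi g S U₂ z ^ 2)
      = fun x => ∑ T₂ ∈ (univ : Finset (Fin k)).powerset.filter
          (fun T => T ∩ S = U₂ ∧ T.card ≤ d), qq μi g (U₁ ∩ U₂) T₂ x :=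
    funext (PP_FF_sq hsum d g hg Finset.inter_subset_right)
  rw [hA, hB, ip_sum_left]
  exact Finset.sum_congr rfl fun T₁ _ => ip_sum_right _ _ _

lemma perS_bound (hnn : ∀ i x, 0 ≤ μi i x) (hsum : ∀ i, ∑ a, μi i a = 1) (d : ℕ)
    {η : ℝ} (hη : 0 < η) (g : (∀ i, V i) → ℝ)
    (hg : ∀ S : Finset (Fin k), d < S.card → ∀ x, ee μi S g x = 0)
    (S : Finset (Fin k)) (hS : S ⊆ univ) :
    inner' (prodMeasure μi) (ee μi S (fun z => g z ^ 2)) (ee μi S (fun z => g z ^ 2))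
      ≤ ∑ p ∈ ((univ : Finset (Fin k)).powerset ×ˢ (univ : Finset (Fin k)).powerset).filter
            (fun p => p.1 ∪ p.2 = S),
          ((2*η + η^2) ^ S.card * (η ^ (p.1.card + p.2.card))⁻¹)
            * ∑ T₁ ∈ (univ : Finset (Fin k)).powerset.filter
                  (fun T => T ∩ S = p.1 ∧ T.card ≤ d),
                ∑ T₂ ∈ (univ : Finset (Fin k)).powerset.filter
                    (fun T => T ∩ S = p.2 ∧ T.card ≤ d),
                  inner' (prodMeasure μi) (qq μi g (p.1 ∩ p.2) T₁)
                    (qq μi g (p.1 ∩ p.2) T₂) := by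
  have hdecomp : ee μi S (fun z => g z ^ 2)
      = fun x => ∑ p ∈ ((univ : Finset (Fin k)).powerset ×ˢ
            (univ : Finset (Fin k)).powerset).filter (fun p => p.1 ∪ p.2 = S),
          ee μi S (fun z => FF μi g S p.1 z * FF μi g S p.2 z) x :=
    funext (ee_sq_decomp hsum g S hS)
  rw [hdecomp]
  refine (weighted_cs hnn _ _ (fun p => η ^ (p.1.card + p.2.card))
    (fun p _ => pow_pos hη _)).trans ?_
  rw [count_pairs S η, Finset.mul_sum]
  refine Finset.sum_le_sum fun p hp => ?_
  rw [Finset.mem_filter, Finset.mem_product, Finset.mem_powerset, Finset.mem_powerset] at hp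
  have hU₁ : p.1 ⊆ S := by rw [← hp.2]; exact Finset.subset_union_left
  have hU₂ : p.2 ⊆ S := by rw [← hp.2]; exact Finset.subset_union_right
  have hx := perP_bound hnn hsum d g hg hU₁ hU₂
  have hco : (0:ℝ) ≤ (2*η + η^2) ^ S.card * (η ^ (p.1.card + p.2.card))⁻¹ := by
    have h1 : (0:ℝ) ≤ 2*η + η^2 := by nlinarith
    exact mul_nonneg (pow_nonneg h1 _) (inv_nonneg.mpr (pow_nonneg (le_of_lt hη) _))
  calc (2*η + η^2) ^ S.card * ((η ^ (p.1.card + p.2.card))⁻¹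
        * inner' (prodMeasure μi) (ee μi S (fun z => FF μi g S p.1 z * FF μi g S p.2 z))
            (ee μi S (fun z => FF μi g S p.1 z * FF μi g S p.2 z)))
      = ((2*η + η^2) ^ S.card * (η ^ (p.1.card + p.2.card))⁻¹)
          * inner' (prodMeasure μi) (ee μi S (fun z => FF μi g S p.1 z * FF μi g S p.2 z))
              (ee μi S (fun z => FF μi g S p.1 z * FF μi g S p.2 z)) := by ring
    _ ≤ _ := mul_le_mul_of_nonneg_left hx hco

lemma ite_ite_and {c₁ c₂ : Prop} [Decidable c₁] [Decidable c₂] (X : ℝ) :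
    (if c₁ then (if c₂ then X else 0) else 0) = if c₁ ∧ c₂ then X else 0 := by
  split_ifs <;> first | rfl | tauto

lemma perR_bound (hnn : ∀ i x, 0 ≤ μi i x) (hsum : ∀ i, ∑ a, μi i a = 1) (d : ℕ)
    {η : ℝ} (hη : 0 < η) (g : (∀ i, V i) → ℝ) (R : Finset (Fin k)) :
    ∑ p ∈ ((univ : Finset (Fin k)).powerset ×ˢ (univ : Finset (Fin k)).powerset).filter
        (fun p => p.1 ∩ p.2 = R),
        ((2*η + η^2) ^ ((p.1 ∪ p.2).card) * (η ^ (p.1.card + p.2.card))⁻¹)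
          * ∑ T₁ ∈ (univ : Finset (Fin k)).powerset.filter
                (fun T => T ∩ (p.1 ∪ p.2) = p.1 ∧ T.card ≤ d),
              ∑ T₂ ∈ (univ : Finset (Fin k)).powerset.filter
                  (fun T => T ∩ (p.1 ∪ p.2) = p.2 ∧ T.card ≤ d),
                inner' (prodMeasure μi) (qq μi g R T₁) (qq μi g R T₂)
      ≤ (((2+η)/η) ^ R.card * (3+η) ^ (2*(d - R.card)))
          * ∑ T₁ ∈ (univ : Finset (Fin k)).powerset.filter
                (fun T => R ⊆ T ∧ T.card ≤ d),
              ∑ T₂ ∈ (univ : Finset (Fin k)).powerset.filter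
                  (fun T => R ⊆ T ∧ T.card ≤ d),
                inner' (prodMeasure μi) (qq μi g R T₁) (qq μi g R T₂) := by
  set Pu := (univ : Finset (Fin k)).powerset with hPu
  set ss := Pu.filter (fun T => R ⊆ T ∧ T.card ≤ d) with hss
  set co : Finset (Fin k) × Finset (Fin k) → ℝ :=
    fun p => (2*η + η^2) ^ ((p.1 ∪ p.2).card) * (η ^ (p.1.card + p.2.card))⁻¹ with hco
  set QQ : Finset (Fin k) → Finset (Fin k) → ℝ :=
    fun T₁ T₂ => inner' (prodMeasure μi) (qq μi g R T₁) (qq μi g R T₂) with hQQ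
  have hQQnn : ∀ T₁ T₂, 0 ≤ QQ T₁ T₂ := fun T₁ T₂ =>
    ip_nonneg hnn (qq_nonneg hnn g R T₁) (qq_nonneg hnn g R T₂)
  -- rewrite each summand as a triple ite-sum over ss × ss
  have hstep1 : ∀ p ∈ (Pu ×ˢ Pu).filter (fun p => p.1 ∩ p.2 = R),
      co p * (∑ T₁ ∈ Pu.filter (fun T => T ∩ (p.1 ∪ p.2) = p.1 ∧ T.card ≤ d),
          ∑ T₂ ∈ Pu.filter (fun T => T ∩ (p.1 ∪ p.2) = p.2 ∧ T.card ≤ d), QQ T₁ T₂)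
      = ∑ T₁ ∈ ss, ∑ T₂ ∈ ss,
          (if T₁ ∩ (p.1 ∪ p.2) = p.1 ∧ T₂ ∩ (p.1 ∪ p.2) = p.2
            then co p * QQ T₁ T₂ else 0) := by
    intro p hp
    rw [Finset.mem_filter] at hp
    have hR1 : R ⊆ p.1 := by rw [← hp.2]; exact Finset.inter_subset_left
    have hR2 : R ⊆ p.2 := by rw [← hp.2]; exact Finset.inter_subset_right
    have hfil1 : Pu.filter (fun T => T ∩ (p.1 ∪ p.2) = p.1 ∧ T.card ≤ d)
        = ss.filter (fun T => T ∩ (p.1 ∪ p.2) = p.1) := by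
      rw [hss, Finset.filter_filter]
      refine Finset.filter_congr fun T hT => ?_
      constructor
      · rintro ⟨h1, h2⟩
        exact ⟨⟨hR1.trans (h1 ▸ Finset.inter_subset_left), h2⟩, h1⟩
      · rintro ⟨⟨_, h2⟩, h1⟩
        exact ⟨h1, h2⟩
    have hfil2 : Pu.filter (fun T => T ∩ (p.1 ∪ p.2) = p.2 ∧ T.card ≤ d)
        = ss.filter (fun T => T ∩ (p.1 ∪ p.2) = p.2) := by
      rw [hss, Finset.filter_filter]
      refine Finset.filter_congr fun T hT => ?_
      constructor
      · rintro ⟨h1, h2⟩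
        exact ⟨⟨hR2.trans (h1 ▸ Finset.inter_subset_left), h2⟩, h1⟩
      · rintro ⟨⟨_, h2⟩, h1⟩
        exact ⟨h1, h2⟩
    rw [hfil1, Finset.sum_filter, Finset.mul_sum]
    refine Finset.sum_congr rfl fun T₁ _ => ?_
    by_cases h1 : T₁ ∩ (p.1 ∪ p.2) = p.1
    · rw [if_pos h1, hfil2, Finset.sum_filter, Finset.mul_sum]
      refine Finset.sum_congr rfl fun T₂ _ => ?_
      by_cases h2 : T₂ ∩ (p.1 ∪ p.2) = p.2
      · rw [if_pos h2, if_pos ⟨h1, h2⟩]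
      · rw [if_neg h2, if_neg (fun hc => h2 hc.2), mul_zero]
    · rw [if_neg h1, mul_zero]
      symm
      exact Finset.sum_eq_zero fun T₂ _ => if_neg (fun hc => h1 hc.1)
  rw [Finset.sum_congr rfl hstep1]
  rw [Finset.sum_comm]
  have hswap2 : ∀ T₁ ∈ ss,
      (∑ p ∈ (Pu ×ˢ Pu).filter (fun p => p.1 ∩ p.2 = R), ∑ T₂ ∈ ss,
        (if T₁ ∩ (p.1 ∪ p.2) = p.1 ∧ T₂ ∩ (p.1 ∪ p.2) = p.2 then co p * QQ T₁ T₂ else 0))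
      = ∑ T₂ ∈ ss, ∑ p ∈ (Pu ×ˢ Pu).filter (fun p => p.1 ∩ p.2 = R),
        (if T₁ ∩ (p.1 ∪ p.2) = p.1 ∧ T₂ ∩ (p.1 ∪ p.2) = p.2 then co p * QQ T₁ T₂ else 0) :=
    fun T₁ _ => Finset.sum_comm
  rw [Finset.sum_congr rfl hswap2]
  have hper : ∀ T₁ ∈ ss, ∀ T₂ ∈ ss,
      (∑ p ∈ (Pu ×ˢ Pu).filter (fun p => p.1 ∩ p.2 = R),
        (if T₁ ∩ (p.1 ∪ p.2) = p.1 ∧ T₂ ∩ (p.1 ∪ p.2) = p.2 then co p * QQ T₁ T₂ else 0))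
      ≤ (((2+η)/η) ^ R.card * (3+η) ^ (2*(d - R.card))) * QQ T₁ T₂ := by
    intro T₁ hT₁ T₂ hT₂
    rw [hss, Finset.mem_filter] at hT₁ hT₂
    have e1 : (∑ p ∈ (Pu ×ˢ Pu).filter (fun p => p.1 ∩ p.2 = R),
        (if T₁ ∩ (p.1 ∪ p.2) = p.1 ∧ T₂ ∩ (p.1 ∪ p.2) = p.2 then co p * QQ T₁ T₂ else 0))
        = (∑ p ∈ ((Pu ×ˢ Pu).filter (fun p => p.1 ∩ p.2 = R)).filter
            (fun p => T₁ ∩ (p.1 ∪ p.2) = p.1 ∧ T₂ ∩ (p.1 ∪ p.2) = p.2), co p) * QQ T₁ T₂ := by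
      rw [← Finset.sum_filter, ← Finset.sum_mul]
    rw [e1]
    refine mul_le_mul_of_nonneg_right ?_ (hQQnn T₁ T₂)
    have e2 : ((Pu ×ˢ Pu).filter (fun p => p.1 ∩ p.2 = R)).filter
        (fun p => T₁ ∩ (p.1 ∪ p.2) = p.1 ∧ T₂ ∩ (p.1 ∪ p.2) = p.2)
        = (Pu ×ˢ Pu).filter
            (fun p => p.1 ∩ p.2 = R ∧ T₁ ∩ (p.1 ∪ p.2) = p.1 ∧ T₂ ∩ (p.1 ∪ p.2) = p.2) := by
      rw [Finset.filter_filter]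
    rw [e2]
    exact coeff_bound d hη hT₁.2.1 hT₁.2.2 hT₂.2.1 hT₂.2.2
  calc ∑ T₁ ∈ ss, ∑ T₂ ∈ ss, ∑ p ∈ (Pu ×ˢ Pu).filter (fun p => p.1 ∩ p.2 = R),
        (if T₁ ∩ (p.1 ∪ p.2) = p.1 ∧ T₂ ∩ (p.1 ∪ p.2) = p.2 then co p * QQ T₁ T₂ else 0)
      ≤ ∑ T₁ ∈ ss, ∑ T₂ ∈ ss,
          (((2+η)/η) ^ R.card * (3+η) ^ (2*(d - R.card))) * QQ T₁ T₂ :=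
        Finset.sum_le_sum fun T₁ hT₁ => Finset.sum_le_sum fun T₂ hT₂ =>
          hper T₁ hT₁ T₂ hT₂
    _ = (((2+η)/η) ^ R.card * (3+η) ^ (2*(d - R.card))) * ∑ T₁ ∈ ss, ∑ T₂ ∈ ss, QQ T₁ T₂ := by
        rw [Finset.mul_sum]
        exact Finset.sum_congr rfl fun T₁ _ => by rw [Finset.mul_sum]

lemma ss_sum_eq (hsum : ∀ i, ∑ a, μi i a = 1) (d : ℕ) (g : (∀ i, V i) → ℝ)
    (hg : ∀ S : Finset (Fin k), d < S.card → ∀ x, ee μi S g x = 0) (R : Finset (Fin k)) :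
    ∑ T₁ ∈ (univ : Finset (Fin k)).powerset.filter (fun T => R ⊆ T ∧ T.card ≤ d),
        ∑ T₂ ∈ (univ : Finset (Fin k)).powerset.filter (fun T => R ⊆ T ∧ T.card ≤ d),
          inner' (prodMeasure μi) (qq μi g R T₁) (qq μi g R T₂)
      = expect (prodMeasure μi) (fun x => (ii μi R g x)^2) := by
  have hii : ii μi R g = fun x => ∑ T ∈ (univ : Finset (Fin k)).powerset.filter
      (fun T => R ⊆ T ∧ T.card ≤ d), qq μi g R T x :=
    funext (ii_eq_sum_card hsum d g hg R)
  have hexp : expect (prodMeasure μi) (fun x => (ii μi R g x)^2)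
      = inner' (prodMeasure μi) (ii μi R g) (ii μi R g) := by
    unfold expect inner'
    exact Finset.sum_congr rfl fun x _ => by ring
  rw [hexp, hii, ip_sum_left]
  exact Finset.sum_congr rfl fun T₁ _ => (ip_sum_right _ _ _).symm

lemma clean_main (hnn : ∀ i x, 0 ≤ μi i x) (hsum : ∀ i, ∑ a, μi i a = 1) (d : ℕ)
    {η : ℝ} (hη : 0 < η) (g : (∀ i, V i) → ℝ)
    (hg : ∀ S : Finset (Fin k), d < S.card → ∀ x, ee μi S g x = 0) :
    norm4p4 (prodMeasure μi) g ≤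
      ∑ R ∈ (univ : Finset (Fin k)).powerset.filter (fun R : Finset (Fin k) => R.card ≤ d),
        ((2+η)/η) ^ R.card * (3+η) ^ (2*(d - R.card))
          * expect (prodMeasure μi) (fun x => (ii μi R g x)^2) := by
  have stepA : norm4p4 (prodMeasure μi) g
      = ∑ S ∈ (univ : Finset (Fin k)).powerset,
          inner' (prodMeasure μi) (ee μi S (fun z => g z^2)) (ee μi S (fun z => g z^2)) := by
    have h1 : norm4p4 (prodMeasure μi) g
        = inner' (prodMeasure μi) (fun z => g z^2) (fun z => g z^2) := by
      unfold norm4p4 inner'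
      exact Finset.sum_congr rfl fun x _ => by ring
    rw [h1, parseval hsum]
  rw [stepA]
  have stepB : ∑ S ∈ (univ : Finset (Fin k)).powerset,
        inner' (prodMeasure μi) (ee μi S (fun z => g z^2)) (ee μi S (fun z => g z^2))
      ≤ ∑ S ∈ (univ : Finset (Fin k)).powerset,
          ∑ p ∈ ((univ : Finset (Fin k)).powerset ×ˢ (univ : Finset (Fin k)).powerset).filter
              (fun p => p.1 ∪ p.2 = S),
            ((2*η + η^2) ^ S.card * (η ^ (p.1.card + p.2.card))⁻¹)
              * ∑ T₁ ∈ (univ : Finset (Fin k)).powerset.filter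
                    (fun T => T ∩ S = p.1 ∧ T.card ≤ d),
                  ∑ T₂ ∈ (univ : Finset (Fin k)).powerset.filter
                      (fun T => T ∩ S = p.2 ∧ T.card ≤ d),
                    inner' (prodMeasure μi) (qq μi g (p.1 ∩ p.2) T₁)
                      (qq μi g (p.1 ∩ p.2) T₂) :=
    Finset.sum_le_sum fun S hS =>
      perS_bound hnn hsum d hη g hg S (Finset.mem_powerset.1 hS)
  refine stepB.trans ?_
  -- collapse the S-fibration
  have stepC : ∑ S ∈ (univ : Finset (Fin k)).powerset,
        ∑ p ∈ ((univ : Finset (Fin k)).powerset ×ˢ (univ : Finset (Fin k)).powerset).filter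
            (fun p => p.1 ∪ p.2 = S),
          ((2*η + η^2) ^ S.card * (η ^ (p.1.card + p.2.card))⁻¹)
            * ∑ T₁ ∈ (univ : Finset (Fin k)).powerset.filter
                  (fun T => T ∩ S = p.1 ∧ T.card ≤ d),
                ∑ T₂ ∈ (univ : Finset (Fin k)).powerset.filter
                    (fun T => T ∩ S = p.2 ∧ T.card ≤ d),
                  inner' (prodMeasure μi) (qq μi g (p.1 ∩ p.2) T₁)
                    (qq μi g (p.1 ∩ p.2) T₂)
      = ∑ p ∈ (univ : Finset (Fin k)).powerset ×ˢ (univ : Finset (Fin k)).powerset,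
          ((2*η + η^2) ^ ((p.1 ∪ p.2).card) * (η ^ (p.1.card + p.2.card))⁻¹)
            * ∑ T₁ ∈ (univ : Finset (Fin k)).powerset.filter
                  (fun T => T ∩ (p.1 ∪ p.2) = p.1 ∧ T.card ≤ d),
                ∑ T₂ ∈ (univ : Finset (Fin k)).powerset.filter
                    (fun T => T ∩ (p.1 ∪ p.2) = p.2 ∧ T.card ≤ d),
                  inner' (prodMeasure μi) (qq μi g (p.1 ∩ p.2) T₁)
                    (qq μi g (p.1 ∩ p.2) T₂) := by
    have hcongr : ∀ S ∈ (univ : Finset (Fin k)).powerset,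
        (∑ p ∈ ((univ : Finset (Fin k)).powerset ×ˢ (univ : Finset (Fin k)).powerset).filter
            (fun p => p.1 ∪ p.2 = S),
          ((2*η + η^2) ^ S.card * (η ^ (p.1.card + p.2.card))⁻¹)
            * ∑ T₁ ∈ (univ : Finset (Fin k)).powerset.filter
                  (fun T => T ∩ S = p.1 ∧ T.card ≤ d),
                ∑ T₂ ∈ (univ : Finset (Fin k)).powerset.filter
                    (fun T => T ∩ S = p.2 ∧ T.card ≤ d),
                  inner' (prodMeasure μi) (qq μi g (p.1 ∩ p.2) T₁)
                    (qq μi g (p.1 ∩ p.2) T₂))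
        = ∑ p ∈ ((univ : Finset (Fin k)).powerset ×ˢ (univ : Finset (Fin k)).powerset).filter
            (fun p => p.1 ∪ p.2 = S),
          ((2*η + η^2) ^ ((p.1 ∪ p.2).card) * (η ^ (p.1.card + p.2.card))⁻¹)
            * ∑ T₁ ∈ (univ : Finset (Fin k)).powerset.filter
                  (fun T => T ∩ (p.1 ∪ p.2) = p.1 ∧ T.card ≤ d),
                ∑ T₂ ∈ (univ : Finset (Fin k)).powerset.filter
                    (fun T => T ∩ (p.1 ∪ p.2) = p.2 ∧ T.card ≤ d),
                  inner' (prodMeasure μi) (qq μi g (p.1 ∩ p.2) T₁)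
                    (qq μi g (p.1 ∩ p.2) T₂) := by
      intro S _
      refine Finset.sum_congr rfl fun p hp => ?_
      rw [Finset.mem_filter] at hp
      rw [← hp.2]
    rw [Finset.sum_congr rfl hcongr]
    exact Finset.sum_fiberwise_of_maps_to
      (fun p _ => Finset.mem_powerset.2 (Finset.subset_univ _)) _
  rw [stepC]
  -- fiber over R = p.1 ∩ p.2
  rw [← Finset.sum_fiberwise_of_maps_to (g := fun p => p.1 ∩ p.2)
    (fun p _ => Finset.mem_powerset.2 (Finset.subset_univ _)) _]
  -- bound each R-fiber
  have stepE : ∀ R ∈ (univ : Finset (Fin k)).powerset,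
      (∑ p ∈ ((univ : Finset (Fin k)).powerset ×ˢ (univ : Finset (Fin k)).powerset).filter
          (fun p => p.1 ∩ p.2 = R),
        ((2*η + η^2) ^ ((p.1 ∪ p.2).card) * (η ^ (p.1.card + p.2.card))⁻¹)
          * ∑ T₁ ∈ (univ : Finset (Fin k)).powerset.filter
                (fun T => T ∩ (p.1 ∪ p.2) = p.1 ∧ T.card ≤ d),
              ∑ T₂ ∈ (univ : Finset (Fin k)).powerset.filter
                  (fun T => T ∩ (p.1 ∪ p.2) = p.2 ∧ T.card ≤ d),
                inner' (prodMeasure μi) (qq μi g (p.1 ∩ p.2) T₁)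
                  (qq μi g (p.1 ∩ p.2) T₂))
      ≤ ((2+η)/η) ^ R.card * (3+η) ^ (2*(d - R.card))
          * expect (prodMeasure μi) (fun x => (ii μi R g x)^2) := by
    intro R _
    have hc : ∀ p ∈ ((univ : Finset (Fin k)).powerset ×ˢ
          (univ : Finset (Fin k)).powerset).filter (fun p => p.1 ∩ p.2 = R),
        (((2*η + η^2) ^ ((p.1 ∪ p.2).card) * (η ^ (p.1.card + p.2.card))⁻¹)
          * ∑ T₁ ∈ (univ : Finset (Fin k)).powerset.filter
                (fun T => T ∩ (p.1 ∪ p.2) = p.1 ∧ T.card ≤ d),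
              ∑ T₂ ∈ (univ : Finset (Fin k)).powerset.filter
                  (fun T => T ∩ (p.1 ∪ p.2) = p.2 ∧ T.card ≤ d),
                inner' (prodMeasure μi) (qq μi g (p.1 ∩ p.2) T₁)
                  (qq μi g (p.1 ∩ p.2) T₂))
        = (((2*η + η^2) ^ ((p.1 ∪ p.2).card) * (η ^ (p.1.card + p.2.card))⁻¹)
          * ∑ T₁ ∈ (univ : Finset (Fin k)).powerset.filter
                (fun T => T ∩ (p.1 ∪ p.2) = p.1 ∧ T.card ≤ d),
              ∑ T₂ ∈ (univ : Finset (Fin k)).powerset.filter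
                  (fun T => T ∩ (p.1 ∪ p.2) = p.2 ∧ T.card ≤ d),
                inner' (prodMeasure μi) (qq μi g R T₁) (qq μi g R T₂)) := by
      intro p hp
      rw [Finset.mem_filter] at hp
      rw [hp.2]
    rw [Finset.sum_congr rfl hc]
    refine (perR_bound hnn hsum d hη g R).trans (le_of_eq ?_)
    rw [ss_sum_eq hsum d g hg R]
  refine (Finset.sum_le_sum stepE).trans (le_of_eq ?_)
  -- drop the zero terms with R.card > d
  rw [← Finset.sum_filter_add_sum_filter_not ((univ : Finset (Fin k)).powerset)
    (fun R : Finset (Fin k) => R.card ≤ d)]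
  have hzero : ∑ R ∈ (univ : Finset (Fin k)).powerset.filter
      (fun R : Finset (Fin k) => ¬ R.card ≤ d),
      ((2+η)/η) ^ R.card * (3+η) ^ (2*(d - R.card))
        * expect (prodMeasure μi) (fun x => (ii μi R g x)^2) = 0 := by
    refine Finset.sum_eq_zero fun R hR => ?_
    rw [Finset.mem_filter] at hR
    have hii0 : ∀ x, ii μi R g x = 0 := by
      intro x
      rw [ii_eq_sum_card hsum d g hg R]
      refine Finset.sum_eq_zero fun T hT => ?_
      rw [Finset.mem_filter] at hT
      exfalso
      have := Finset.card_le_card hT.2.1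
      omega
    have hexp0 : expect (prodMeasure μi) (fun x => (ii μi R g x)^2) = 0 := by
      unfold expect
      refine Finset.sum_eq_zero fun x _ => ?_
      dsimp only
      rw [hii0 x]
      ring
    rw [hexp0, mul_zero]
  rw [hzero, add_zero]

lemma numeric_bound (d r : ℕ) (hr : r ≤ d) :
    ((2 + ((max d 1 : ℕ) : ℝ)⁻¹) / ((max d 1 : ℕ) : ℝ)⁻¹) ^ r
        * (3 + ((max d 1 : ℕ) : ℝ)⁻¹) ^ (2*(d - r))
      ≤ 2 * 9^d * (9*(d:ℝ))^r := by
  rcases Nat.eq_zero_or_pos d with hd | hd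
  · subst hd
    have hr0 : r = 0 := by omega
    subst hr0
    norm_num
  · have hmax : max d 1 = d := Nat.max_eq_left (by omega)
    rw [hmax]
    set x : ℝ := (d : ℝ) with hx
    have hx1 : (1:ℝ) ≤ x := by
      rw [hx]; exact_mod_cast hd
    have hxpos : (0:ℝ) < x := lt_of_lt_of_le one_pos hx1
    have hxne : x ≠ 0 := ne_of_gt hxpos
    have h1 : (2 + x⁻¹) / x⁻¹ = 2*x + 1 := by
      field_simp
    have h2 : (2*x + 1) ^ r ≤ (9*x) ^ r := by
      refine pow_le_pow_left₀ (by linarith) (by linarith) r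
    have hinvnn : (0:ℝ) ≤ x⁻¹ := inv_nonneg.mpr (le_of_lt hxpos)
    have h3 : (3 + x⁻¹) ^ (2*(d - r)) ≤ (3 + x⁻¹) ^ (2*d) :=
      pow_le_pow_right₀ (by linarith) (by omega)
    have h4 : (3 + x⁻¹) ^ (2*d) ≤ 2 * 9^d := by
      have e1 : (3 + x⁻¹) = 3 * (1 + (3*x)⁻¹) := by
        field_simp
      rw [e1, mul_pow]
      have e2 : (3:ℝ) ^ (2*d) = 9^d := by
        rw [pow_mul]
        norm_num
      rw [e2]
      have h5 : (1 + (3*x)⁻¹) ^ (2*d) ≤ Real.exp ((3*x)⁻¹) ^ (2*d) := by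
        refine pow_le_pow_left₀ ?_ ?_ _
        · positivity
        · have := Real.add_one_le_exp ((3*x)⁻¹)
          linarith
      have h6 : Real.exp ((3*x)⁻¹) ^ (2*d) = Real.exp (((2*d : ℕ) : ℝ) * (3*x)⁻¹) := by
        rw [← Real.exp_nat_mul]
      have h7 : ((2*d : ℕ) : ℝ) * (3*x)⁻¹ = 2/3 := by
        push_cast
        rw [hx]
        field_simp
      have h8 : Real.exp (2/3 : ℝ) ≤ 2 := by
        have hlog : (2/3 : ℝ) ≤ Real.log 2 := by
          have := Real.log_two_gt_d9
          linarith
        calc Real.exp (2/3 : ℝ) ≤ Real.exp (Real.log 2) := Real.exp_le_exp.mpr hlog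
          _ = 2 := Real.exp_log (by norm_num)
      have h9 : (1 + (3*x)⁻¹) ^ (2*d) ≤ 2 := by
        rw [h6, h7] at h5
        exact h5.trans h8
      calc 9^d * (1 + (3*x)⁻¹) ^ (2*d) ≤ 9^d * 2 :=
            mul_le_mul_of_nonneg_left h9 (by positivity)
        _ = 2 * 9^d := by ring
    rw [h1]
    calc (2*x + 1) ^ r * (3 + x⁻¹) ^ (2*(d-r))
        ≤ (9*x) ^ r * (2 * 9^d) := by
          refine mul_le_mul h2 (h3.trans h4) (by positivity) (by positivity)
      _ = 2 * 9^d * (9*x)^r := by ring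

end CleanWorld
theorem statement5 (k : ℕ) (hk : 1 ≤ k)
    (V : Fin k → Type) [∀ i, Fintype (V i)] [∀ i, DecidableEq (V i)]
    (μi : ∀ i, V i → ℝ) (hnn : ∀ i x, 0 ≤ μi i x) (hsum : ∀ i, ∑ x, μi i x = 1)
    (d : ℕ) (f : (∀ i, V i) → ℝ) (hdeg : DegLe (prodMeasure μi) d f) :
    norm4p4 (prodMeasure μi) f ≤
      2 * 9 ^ d *
        ∑ T ∈ univ.powerset.filter (fun T : Finset (Fin k) => T.card ≤ d),
          (9 * (d : ℝ)) ^ T.card *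
            expect (prodMeasure μi) (fun x => (Inf (prodMeasure μi) T f x) ^ 2) := by
  classical
  have hg := trunc_deg (μi := μi) hsum d f
  have hηpos : (0:ℝ) < ((max d 1 : ℕ) : ℝ)⁻¹ := by
    have : (0:ℝ) < ((max d 1 : ℕ) : ℝ) := by
      exact_mod_cast Nat.lt_of_lt_of_le Nat.zero_lt_one (Nat.le_max_right d 1)
    exact inv_pos.mpr this
  have hmain := clean_main hnn hsum d hηpos (trunc μi d f) hg
  rw [norm4p4_trunc hnn hsum hdeg]
  refine hmain.trans ?_
  rw [Finset.mul_sum]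
  refine Finset.sum_le_sum fun R hR => ?_
  rw [Finset.mem_filter] at hR
  have hexp : expect (prodMeasure μi) (fun x => (Inf (prodMeasure μi) R f x)^2)
      = expect (prodMeasure μi) (fun x => (ii μi R (trunc μi d f) x)^2) :=
    expect_congr_support hnn (fun x hx => by rw [Inf_eq_ii hnn hsum hdeg hx R])
  rw [hexp]
  have hnum := numeric_bound d R.card hR.2
  have hexpnn : 0 ≤ expect (prodMeasure μi) (fun x => (ii μi R (trunc μi d f) x)^2) :=
    Finset.sum_nonneg fun x _ => mul_nonneg (mu_nonneg hnn x) (sq_nonneg _)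
  calc ((2 + ((max d 1 : ℕ) : ℝ)⁻¹) / ((max d 1 : ℕ) : ℝ)⁻¹) ^ R.card
        * (3 + ((max d 1 : ℕ) : ℝ)⁻¹) ^ (2*(d - R.card))
        * expect (prodMeasure μi) (fun x => (ii μi R (trunc μi d f) x)^2)
      ≤ (2 * 9^d * (9*(d:ℝ))^R.card)
          * expect (prodMeasure μi) (fun x => (ii μi R (trunc μi d f) x)^2) :=
        mul_le_mul_of_nonneg_right hnum hexpnn
    _ = 2 * 9^d * ((9*(d:ℝ))^R.card
          * expect (prodMeasure μi) (fun x => (ii μi R (trunc μi d f) x)^2)) := by ring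

end GLL
end

section
/- Let μ be an ε-product probability measure on V = V₁×⋯×V_k, let S,T ⊆ [k] be disjoint, and let f ∈ L²(V_S,μ_S). Then ‖A_{S,T}f − E_{μ_S}[f]‖²_{L²(μ_T)} ≤ |S|·|T|·ε²·‖f‖²_{L²(μ_S)}, where E_{μ_S}[f] denotes the constant function with value E_{x∼μ_S}[f(x)]. -/
open Finset

namespace GLL

variable {k : ℕ} {V : Fin k → Type} [∀ i, Fintype (V i)] [∀ i, DecidableEq (V i)]

variable {μ : (∀ i, V i) → ℝ} {S T : Finset (Fin k)} {x y z : ∀ i, V i}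

lemma marg_nonneg (h0 : ∀ x, 0 ≤ μ x) : 0 ≤ marg μ S x := by
  refine Finset.sum_nonneg fun z _ => ?_
  split
  · exact h0 z
  · exact le_rfl

lemma le_marg (h0 : ∀ x, 0 ≤ μ x) : μ x ≤ marg μ S x := by
  have := Finset.single_le_sum (f := fun z => if ∀ i ∈ S, z i = x i then μ z else 0)
    (s := univ) (fun z _ => by split
                               · exact h0 z
                               · exact le_rfl) (mem_univ x)
  simpa [marg] using this

lemma marg_congr (h : ∀ i ∈ S, x i = y i) : marg μ S x = marg μ S y := by
  refine Finset.sum_congr rfl fun z _ => ?_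
  have : (∀ i ∈ S, z i = x i) ↔ (∀ i ∈ S, z i = y i) :=
    ⟨fun hz i hi => (hz i hi).trans (h i hi), fun hz i hi => (hz i hi).trans (h i hi).symm⟩
  simp [this]

lemma cond_nonneg (h0 : ∀ x, 0 ≤ μ x) : 0 ≤ cond μ S x z := by
  unfold cond; split
  · exact div_nonneg (h0 z) (marg_nonneg h0)
  · exact le_rfl

lemma cond_congr (h : ∀ i ∈ S, x i = y i) : cond μ S x = cond μ S y := by
  funext z
  unfold cond
  rw [marg_congr h]
  have : (∀ i ∈ S, z i = x i) ↔ (∀ i ∈ S, z i = y i) :=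
    ⟨fun hz i hi => (hz i hi).trans (h i hi), fun hz i hi => (hz i hi).trans (h i hi).symm⟩
  simp [this]

lemma marg_eq_zero (h0 : ∀ x, 0 ≤ μ x) (hm : marg μ S x = 0) (hz : ∀ i ∈ S, z i = x i) :
    μ z = 0 := by
  have h1 : μ z ≤ marg μ S z := le_marg h0
  rw [marg_congr hz, hm] at h1
  exact le_antisymm h1 (h0 z)

lemma sum_cond (hm : marg μ S x ≠ 0) : ∑ z, cond μ S x z = 1 := by
  have : ∀ z, cond μ S x z = (if ∀ i ∈ S, z i = x i then μ z else 0) / marg μ S x := by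
    intro z; unfold cond; split <;> simp
  rw [Finset.sum_congr rfl fun z _ => this z, ← Finset.sum_div]
  exact div_self hm

lemma cond_isProb (h0 : ∀ x, 0 ≤ μ x) (hm : 0 < marg μ S x) : IsProb (cond μ S x) :=
  ⟨fun _ => cond_nonneg h0, sum_cond hm.ne'⟩

lemma marg_flip : marg μ S z = ∑ x, if ∀ i ∈ S, z i = x i then μ x else 0 := by
  refine Finset.sum_congr rfl fun w _ => ?_
  have : (∀ i ∈ S, w i = z i) ↔ (∀ i ∈ S, z i = w i) :=
    ⟨fun h i hi => (h i hi).symm, fun h i hi => (h i hi).symm⟩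
  simp [marg, this]

lemma adjoint (h0 : ∀ x, 0 ≤ μ x) (F G : (∀ i, V i) → ℝ) (hG : Junta S G) :
    ∑ x, μ x * (Aop μ S F x * G x) = ∑ x, μ x * (F x * G x) := by
  have key : ∀ z, ∑ x, μ x * (cond μ S x z * F z * G x) = μ z * (F z * G z) := by
    intro z
    by_cases hm : marg μ S z = 0
    · have hz : μ z = 0 := marg_eq_zero h0 hm (fun i _ => rfl)
      have h1 : ∀ x, μ x * (cond μ S x z * F z * G x) = 0 := by
        intro x; unfold cond; split
        · simp [hz]
        · simp
      simp [h1, hz]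
    · have step : ∀ x, μ x * (cond μ S x z * F z * G x)
          = (if ∀ i ∈ S, z i = x i then μ x else 0) * (μ z / marg μ S z * (F z * G z)) := by
        intro x; unfold cond
        by_cases hzx : ∀ i ∈ S, z i = x i
        · have h1 : marg μ S x = marg μ S z := marg_congr fun i hi => (hzx i hi).symm
          have h2 : G x = G z := hG x z fun i hi => (hzx i hi).symm
          rw [if_pos hzx, if_pos hzx, h1, h2]
          try ring
        · simp [hzx]
      rw [Finset.sum_congr rfl fun x _ => step x, ← Finset.sum_mul, ← marg_flip]
      field_simp
  calc ∑ x, μ x * (Aop μ S F x * G x)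
      = ∑ x, ∑ z, μ x * (cond μ S x z * F z * G x) := by
        refine Finset.sum_congr rfl fun x _ => ?_
        unfold Aop
        rw [Finset.sum_mul, Finset.mul_sum]
        try exact Finset.sum_congr rfl fun z _ => by ring
    _ = ∑ z, ∑ x, μ x * (cond μ S x z * F z * G x) := Finset.sum_comm
    _ = ∑ z, μ z * (F z * G z) := Finset.sum_congr rfl fun z _ => key z

lemma junta_Aop (F : (∀ i, V i) → ℝ) : Junta S (Aop μ S F) := by
  intro x y h
  unfold Aop
  rw [cond_congr h]

lemma cond_of_marg_zero (hm : marg μ S x = 0) : cond μ S x = fun _ => 0 := by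
  funext z; unfold cond; rw [hm]; split <;> simp

lemma Aop_congr_support {F G : (∀ i, V i) → ℝ}
    (h : ∀ z, (∀ i ∈ S, z i = x i) → F z = G z) : Aop μ S F x = Aop μ S G x := by
  unfold Aop
  refine Finset.sum_congr rfl fun z _ => ?_
  by_cases hz : ∀ i ∈ S, z i = x i
  · rw [h z hz]
  · unfold cond; simp [hz]

lemma Aop_of_marg_zero (F : (∀ i, V i) → ℝ) (hm : marg μ S x = 0) : Aop μ S F x = 0 := by
  unfold Aop
  rw [cond_of_marg_zero hm]
  simp

lemma cs_sqrt {ι : Type*} [Fintype ι] (a b : ι → ℝ) (ha : ∀ i, 0 ≤ a i) (hb : ∀ i, 0 ≤ b i) :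
    ∑ i, Real.sqrt (a i) * Real.sqrt (b i) ≤ Real.sqrt (∑ i, a i) * Real.sqrt (∑ i, b i) := by
  have h := Finset.sum_mul_sq_le_sq_mul_sq univ (fun i => Real.sqrt (a i))
    (fun i => Real.sqrt (b i))
  simp only [Real.sq_sqrt (ha _), Real.sq_sqrt (hb _)] at h
  have h1 : 0 ≤ ∑ i, Real.sqrt (a i) * Real.sqrt (b i) :=
    Finset.sum_nonneg fun i _ => mul_nonneg (Real.sqrt_nonneg _) (Real.sqrt_nonneg _)
  calc ∑ i, Real.sqrt (a i) * Real.sqrt (b i)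
      = Real.sqrt ((∑ i, Real.sqrt (a i) * Real.sqrt (b i)) ^ 2) := (Real.sqrt_sq h1).symm
    _ ≤ Real.sqrt ((∑ i, a i) * ∑ i, b i) := Real.sqrt_le_sqrt h
    _ = Real.sqrt (∑ i, a i) * Real.sqrt (∑ i, b i) :=
        Real.sqrt_mul (Finset.sum_nonneg fun i _ => ha i) _

lemma jensen (h0 : ∀ x, 0 ≤ μ x) (F : (∀ i, V i) → ℝ) :
    (Aop μ S F x) ^ 2 ≤ Aop μ S (fun z => F z ^ 2) x := by
  by_cases hm : marg μ S x = 0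
  · rw [Aop_of_marg_zero _ hm, Aop_of_marg_zero _ hm]
    norm_num
  · have h := Finset.sum_mul_sq_le_sq_mul_sq univ (fun z => Real.sqrt (cond μ S x z))
      (fun z => Real.sqrt (cond μ S x z) * F z)
    have hc : ∀ z, 0 ≤ cond μ S x z := fun z => cond_nonneg h0
    have e1 : ∀ z, Real.sqrt (cond μ S x z) * (Real.sqrt (cond μ S x z) * F z)
        = cond μ S x z * F z := by
      intro z
      rw [← mul_assoc, Real.mul_self_sqrt (hc z)]
    have e2 : ∀ z, Real.sqrt (cond μ S x z) ^ 2 = cond μ S x z := fun z => Real.sq_sqrt (hc z)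
    have e3 : ∀ z, (Real.sqrt (cond μ S x z) * F z) ^ 2 = cond μ S x z * F z ^ 2 := by
      intro z
      rw [mul_pow, e2]
    simp only [e1, e2, e3] at h
    rw [sum_cond hm, one_mul] at h
    exact h

lemma expect_sq_le_normSq (hμ : IsProb μ) (F : (∀ i, V i) → ℝ) :
    (expect μ F) ^ 2 ≤ normSq μ F := by
  have h := Finset.sum_mul_sq_le_sq_mul_sq univ (fun z => Real.sqrt (μ z))
    (fun z => Real.sqrt (μ z) * F z)
  have e1 : ∀ z, Real.sqrt (μ z) * (Real.sqrt (μ z) * F z) = μ z * F z := by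
    intro z
    rw [← mul_assoc, Real.mul_self_sqrt (hμ.1 z)]
  have e2 : ∀ z, Real.sqrt (μ z) ^ 2 = μ z := fun z => Real.sq_sqrt (hμ.1 z)
  have e3 : ∀ z, (Real.sqrt (μ z) * F z) ^ 2 = μ z * F z ^ 2 := by
    intro z
    rw [mul_pow, e2]
  simp only [e1, e2, e3] at h
  rw [hμ.2, one_mul] at h
  exact h

lemma div_div_div_same {a b M : ℝ} (hM : M ≠ 0) : (a / M) / (b / M) = a / b := by
  rcases eq_or_ne b 0 with rfl | hb
  · simp
  · field_simp

lemma marg_cond (h0 : ∀ x, 0 ≤ μ x) (hd : Disjoint S T) (hm : 0 < marg μ T y)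
    (hx : ∀ i ∈ T, x i = y i) :
    marg (cond μ T y) S x = marg μ (S ∪ T) x / marg μ T y := by
  have expand : ∀ z, cond μ T y z
      = if ∀ i ∈ T, z i = y i then μ z / marg μ T y else 0 := fun z => rfl
  rw [show marg (cond μ T y) S x = ∑ z, if ∀ i ∈ S, z i = x i then cond μ T y z else 0 from rfl,
    show marg μ (S ∪ T) x = ∑ z, if ∀ i ∈ S ∪ T, z i = x i then μ z else 0 from rfl,
    Finset.sum_div]
  refine Finset.sum_congr rfl fun z _ => ?_
  rw [expand]
  by_cases h1 : ∀ i ∈ S, z i = x i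
  · by_cases h2 : ∀ i ∈ T, z i = y i
    · have h3 : ∀ i ∈ S ∪ T, z i = x i := by
        intro i hi
        rcases Finset.mem_union.1 hi with hi | hi
        · exact h1 i hi
        · exact (h2 i hi).trans (hx i hi).symm
      rw [if_pos h1, if_pos h2, if_pos h3]
    · have h3 : ¬ ∀ i ∈ S ∪ T, z i = x i := by
        intro h3
        exact h2 fun i hi => (h3 i (Finset.mem_union_right _ hi)).trans (hx i hi)
      rw [if_pos h1, if_neg h2, if_neg h3, zero_div]
  · have h3 : ¬ ∀ i ∈ S ∪ T, z i = x i := fun h3 =>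
      h1 fun i hi => h3 i (Finset.mem_union_left _ hi)
    rw [if_neg h1, if_neg h3, zero_div]

lemma cond_cond (h0 : ∀ x, 0 ≤ μ x) (hd : Disjoint S T) (hm : 0 < marg μ T y)
    (hx : ∀ i ∈ T, x i = y i) :
    cond (cond μ T y) S x = cond μ (S ∪ T) x := by
  funext z
  have hM := marg_cond h0 hd hm hx
  rw [show cond (cond μ T y) S x z
      = if ∀ i ∈ S, z i = x i then cond μ T y z / marg (cond μ T y) S x else 0 from rfl,
    show cond μ (S ∪ T) x z
      = if ∀ i ∈ S ∪ T, z i = x i then μ z / marg μ (S ∪ T) x else 0 from rfl,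
    hM,
    show cond μ T y z = if ∀ i ∈ T, z i = y i then μ z / marg μ T y else 0 from rfl]
  by_cases h1 : ∀ i ∈ S, z i = x i
  · by_cases h2 : ∀ i ∈ T, z i = y i
    · have h3 : ∀ i ∈ S ∪ T, z i = x i := by
        intro i hi
        rcases Finset.mem_union.1 hi with hi | hi
        · exact h1 i hi
        · exact (h2 i hi).trans (hx i hi).symm
      rw [if_pos h1, if_pos h2, if_pos h3, div_div_div_same hm.ne']
    · have h3 : ¬ ∀ i ∈ S ∪ T, z i = x i := by
        intro h3
        exact h2 fun i hi => (h3 i (Finset.mem_union_right _ hi)).trans (hx i hi)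
      rw [if_pos h1, if_neg h2, if_neg h3, zero_div]
  · have h3 : ¬ ∀ i ∈ S ∪ T, z i = x i := fun h3 =>
      h1 fun i hi => h3 i (Finset.mem_union_left _ hi)
    rw [if_neg h1, if_neg h3]

lemma expect_cond_eq_Aop (F : (∀ i, V i) → ℝ) : expect (cond μ S x) F = Aop μ S F x := rfl

lemma sqrt_ineq {A B c : ℝ} (hA : 0 ≤ A) (hB : 0 ≤ B) (hc : 0 ≤ c) :
    Real.sqrt A + c * Real.sqrt B ≤ Real.sqrt (1 + c ^ 2) * Real.sqrt (A + B) := by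
  set u := Real.sqrt A
  set v := Real.sqrt B
  have hu : 0 ≤ u := Real.sqrt_nonneg _
  have hv : 0 ≤ v := Real.sqrt_nonneg _
  have hu2 : u ^ 2 = A := Real.sq_sqrt hA
  have hv2 : v ^ 2 = B := Real.sq_sqrt hB
  have ht : 0 ≤ Real.sqrt (1 + c ^ 2) * Real.sqrt (A + B) :=
    mul_nonneg (Real.sqrt_nonneg _) (Real.sqrt_nonneg _)
  have hsq : (u + c * v) ^ 2 ≤ (Real.sqrt (1 + c ^ 2) * Real.sqrt (A + B)) ^ 2 := by
    rw [mul_pow, Real.sq_sqrt (by positivity), Real.sq_sqrt (by positivity)]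
    nlinarith [sq_nonneg (c * u - v)]
  calc u + c * v = Real.sqrt ((u + c * v) ^ 2) := (Real.sqrt_sq (by positivity)).symm
    _ ≤ Real.sqrt ((Real.sqrt (1 + c ^ 2) * Real.sqrt (A + B)) ^ 2) := Real.sqrt_le_sqrt hsq
    _ = Real.sqrt (1 + c ^ 2) * Real.sqrt (A + B) := Real.sqrt_sq ht

lemma key (hν : IsProb μ) {ε : ℝ} (hε : 0 ≤ ε) {j : Fin k} {g : (∀ i, V i) → ℝ}
    (hg : Junta {j} g) (S : Finset (Fin k)) :
    j ∉ S →
    (∀ S' ⊆ S, ∀ i ∈ S, i ∉ S' → ∀ x, 0 < marg μ S' x → PairPseudo (cond μ S' x) ε i j) →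
    ∀ f, Junta S f →
    |(∑ x, μ x * (f x * g x)) - expect μ f * expect μ g| ≤
      Real.sqrt S.card * ε * Real.sqrt (normSq μ f) * Real.sqrt (normSq μ g - expect μ g ^ 2) := by
  have hne : Nonempty (∀ i, V i) := by
    rcases isEmpty_or_nonempty (∀ i, V i) with h | h
    · exfalso
      have := hν.2
      rw [Finset.univ_eq_empty, Finset.sum_empty] at this
      norm_num at this
    · exact h
  induction S using Finset.induction_on with
  | empty =>
    intro _ _ f hf
    obtain ⟨x₀⟩ := hne
    have hc : ∀ x, f x = f x₀ := fun x => hf x x₀ (by simp)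
    have h1 : (∑ x, μ x * (f x * g x)) = f x₀ * expect μ g := by
      rw [expect, Finset.mul_sum]
      exact Finset.sum_congr rfl fun x _ => by rw [hc x]; ring
    have h2 : expect μ f = f x₀ := by
      rw [expect, Finset.sum_congr rfl fun x (_ : x ∈ univ) => by rw [hc x],
        ← Finset.sum_mul, hν.2, one_mul]
    rw [h1, h2]
    simp
  | @insert i S' hi IH =>
    intro hj hRP f hf
    have hji : j ≠ i := fun h => hj (h ▸ Finset.mem_insert_self i S')
    have hjS' : j ∉ S' := fun h => hj (Finset.mem_insert_of_mem h)
    set Af := Aop μ S' f with hAfdef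
    set Ag := Aop μ S' g with hAgdef
    have hjAf : Junta S' Af := junta_Aop f
    have one_junta : Junta S' (fun _ : (∀ i, V i) => (1:ℝ)) := fun _ _ _ => rfl
    have hEAf : expect μ Af = expect μ f := by
      have := adjoint (S := S') hν.1 f (fun _ => 1) one_junta
      simpa [expect] using this
    have hEAg : expect μ Ag = expect μ g := by
      have := adjoint (S := S') hν.1 g (fun _ => 1) one_junta
      simpa [expect] using this
    set Cov := fun x => Aop μ S' (fun z => f z * g z) x - Af x * Ag x with hCov
    set Vf := fun x => Aop μ S' (fun z => f z ^ 2) x - Af x ^ 2 with hVf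
    set Vg := fun x => Aop μ S' (fun z => g z ^ 2) x - Ag x ^ 2 with hVg
    have hVf0 : ∀ x, 0 ≤ Vf x := fun x => sub_nonneg.2 (jensen hν.1 f)
    have hVg0 : ∀ x, 0 ≤ Vg x := fun x => sub_nonneg.2 (jensen hν.1 g)
    -- decomposition of the covariance
    have hdecomp : (∑ x, μ x * (f x * g x)) - expect μ f * expect μ g
        = (∑ x, μ x * Cov x)
          + ((∑ x, μ x * (Af x * g x)) - expect μ Af * expect μ g) := by
      have e1 : ∑ x, μ x * Aop μ S' (fun z => f z * g z) x = ∑ x, μ x * (f x * g x) := by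
        have := adjoint (S := S') hν.1 (fun z => f z * g z) (fun _ => 1) one_junta
        simpa using this
      have e2 : ∑ x, μ x * (Af x * Ag x) = ∑ x, μ x * (Af x * g x) := by
        have := adjoint (S := S') hν.1 g Af hjAf
        calc ∑ x, μ x * (Af x * Ag x) = ∑ x, μ x * (Ag x * Af x) :=
              Finset.sum_congr rfl fun x _ => by ring
          _ = ∑ x, μ x * (g x * Af x) := this
          _ = ∑ x, μ x * (Af x * g x) := Finset.sum_congr rfl fun x _ => by ring
      have e3 : ∑ x, μ x * Cov x
          = (∑ x, μ x * Aop μ S' (fun z => f z * g z) x) - ∑ x, μ x * (Af x * Ag x) := by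
        rw [← Finset.sum_sub_distrib]
        exact Finset.sum_congr rfl fun x _ => by rw [hCov]; ring
      rw [e3, e1, e2, hEAf]
      ring
    -- pointwise pseudorandomness bound
    have hpt : ∀ x, 0 < μ x → |Cov x| ≤ ε * (Real.sqrt (Vf x) * Real.sqrt (Vg x)) := by
      intro x hx
      have hmx : 0 < marg μ S' x := lt_of_lt_of_le hx (le_marg hν.1)
      have hPP := hRP S' (Finset.subset_insert i S') i (Finset.mem_insert_self i S') hi x hmx
      set f₁ : V i → ℝ := fun a => f (Function.update x i a) with hf₁
      set f₂ : V j → ℝ := fun a => g (Function.update x j a) with hf₂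
      have hfz : ∀ z, (∀ i' ∈ S', z i' = x i') → f z = f₁ (z i) := by
        intro z hz
        refine hf z (Function.update x i (z i)) ?_
        intro i' hi'
        rcases Finset.mem_insert.1 hi' with rfl | hi'
        · rw [Function.update_self]
        · rw [Function.update_of_ne (ne_of_mem_of_not_mem hi' hi) _ _]
          exact hz i' hi'
      have hgz : ∀ z, g z = f₂ (z j) := by
        intro z
        refine hg z (Function.update x j (z j)) ?_
        intro i' hi'
        rw [Finset.mem_singleton.1 hi', Function.update_self]
      have hPP' := hPP f₁ f₂
      simp only [expect_cond_eq_Aop] at hPP'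
      have c1 : Aop μ S' (fun z => f₁ (z i) * f₂ (z j)) x = Aop μ S' (fun z => f z * g z) x :=
        Aop_congr_support fun z hz => by rw [← hfz z hz, ← hgz z]
      have c2 : Aop μ S' (fun z => f₁ (z i)) x = Af x :=
        Aop_congr_support fun z hz => (hfz z hz).symm
      have c3 : Aop μ S' (fun z => f₂ (z j)) x = Ag x :=
        Aop_congr_support fun z _ => (hgz z).symm
      have c4 : Aop μ S' (fun z => f₁ (z i) ^ 2) x = Aop μ S' (fun z => f z ^ 2) x :=
        Aop_congr_support fun z hz => by rw [← hfz z hz]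
      have c5 : Aop μ S' (fun z => f₂ (z j) ^ 2) x = Aop μ S' (fun z => g z ^ 2) x :=
        Aop_congr_support fun z _ => by rw [← hgz z]
      rw [c1, c2, c3, c4, c5] at hPP'
      calc |Cov x| ≤ ε * Real.sqrt (Vf x * Vg x) := hPP'
        _ = ε * (Real.sqrt (Vf x) * Real.sqrt (Vg x)) := by
            rw [Real.sqrt_mul (hVf0 x)]
    -- summing the pointwise bound
    have hsum1 : |∑ x, μ x * Cov x|
        ≤ ε * (Real.sqrt (∑ x, μ x * Vf x) * Real.sqrt (∑ x, μ x * Vg x)) := by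
      calc |∑ x, μ x * Cov x| ≤ ∑ x, |μ x * Cov x| := Finset.abs_sum_le_sum_abs _ _
        _ ≤ ∑ x, μ x * (ε * (Real.sqrt (Vf x) * Real.sqrt (Vg x))) := by
            refine Finset.sum_le_sum fun x _ => ?_
            rcases eq_or_lt_of_le (hν.1 x) with h | h
            · rw [← h]
              simp
            · rw [abs_mul, abs_of_pos h]
              exact mul_le_mul_of_nonneg_left (hpt x h) h.le
        _ = ε * ∑ x, Real.sqrt (μ x * Vf x) * Real.sqrt (μ x * Vg x) := by
            rw [Finset.mul_sum]
            refine Finset.sum_congr rfl fun x _ => ?_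
            rw [Real.sqrt_mul (hν.1 x), Real.sqrt_mul (hν.1 x),
              show Real.sqrt (μ x) * Real.sqrt (Vf x) * (Real.sqrt (μ x) * Real.sqrt (Vg x))
                = (Real.sqrt (μ x) * Real.sqrt (μ x)) * (Real.sqrt (Vf x) * Real.sqrt (Vg x))
                from by ring,
              Real.mul_self_sqrt (hν.1 x)]
            ring
        _ ≤ ε * (Real.sqrt (∑ x, μ x * Vf x) * Real.sqrt (∑ x, μ x * Vg x)) := by
            refine mul_le_mul_of_nonneg_left ?_ hε
            exact cs_sqrt _ _ (fun x => mul_nonneg (hν.1 x) (hVf0 x))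
              (fun x => mul_nonneg (hν.1 x) (hVg0 x))
    -- identify the sums
    have hSf : ∑ x, μ x * Vf x = normSq μ f - normSq μ Af := by
      have e := adjoint (S := S') hν.1 (fun z => f z ^ 2) (fun _ => 1) one_junta
      have e' : ∑ x, μ x * Aop μ S' (fun z => f z ^ 2) x = normSq μ f := by
        simpa [normSq] using e
      rw [show ∑ x, μ x * Vf x
          = (∑ x, μ x * Aop μ S' (fun z => f z ^ 2) x) - ∑ x, μ x * Af x ^ 2 from by
        rw [← Finset.sum_sub_distrib]
        exact Finset.sum_congr rfl fun x _ => by rw [hVf]; ring, e']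
      rfl
    have hSg : ∑ x, μ x * Vg x = normSq μ g - normSq μ Ag := by
      have e := adjoint (S := S') hν.1 (fun z => g z ^ 2) (fun _ => 1) one_junta
      have e' : ∑ x, μ x * Aop μ S' (fun z => g z ^ 2) x = normSq μ g := by
        simpa [normSq] using e
      rw [show ∑ x, μ x * Vg x
          = (∑ x, μ x * Aop μ S' (fun z => g z ^ 2) x) - ∑ x, μ x * Ag x ^ 2 from by
        rw [← Finset.sum_sub_distrib]
        exact Finset.sum_congr rfl fun x _ => by rw [hVg]; ring, e']
      rfl
    have hSg' : ∑ x, μ x * Vg x ≤ normSq μ g - expect μ g ^ 2 := by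
      have h1 := expect_sq_le_normSq hν Ag
      rw [hEAg] at h1
      rw [hSg]
      linarith
    have hSf0 : 0 ≤ ∑ x, μ x * Vf x :=
      Finset.sum_nonneg fun x _ => mul_nonneg (hν.1 x) (hVf0 x)
    have hnAf0 : 0 ≤ normSq μ Af :=
      Finset.sum_nonneg fun x _ => mul_nonneg (hν.1 x) (sq_nonneg _)
    have hVarg0 : 0 ≤ normSq μ g - expect μ g ^ 2 :=
      sub_nonneg.2 (expect_sq_le_normSq hν g)
    -- induction hypothesis for Af
    have hterm2 := IH (fun h => hj (Finset.mem_insert_of_mem h))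
      (fun S'' hsub i' hi' hni' => hRP S'' (hsub.trans (Finset.subset_insert i S')) i'
        (Finset.mem_insert_of_mem hi') hni')
      Af hjAf
    -- final combination
    set G0 := Real.sqrt (normSq μ g - expect μ g ^ 2) with hG0
    have hG00 : 0 ≤ G0 := Real.sqrt_nonneg _
    have step1 : |(∑ x, μ x * (f x * g x)) - expect μ f * expect μ g|
        ≤ ε * Real.sqrt (∑ x, μ x * Vf x) * G0
          + Real.sqrt S'.card * ε * Real.sqrt (normSq μ Af) * G0 := by
      rw [hdecomp]
      refine (abs_add_le _ _).trans (add_le_add ?_ hterm2)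
      refine hsum1.trans ?_
      rw [show ε * (Real.sqrt (∑ x, μ x * Vf x) * Real.sqrt (∑ x, μ x * Vg x))
          = ε * Real.sqrt (∑ x, μ x * Vf x) * Real.sqrt (∑ x, μ x * Vg x) from by ring]
      exact mul_le_mul_of_nonneg_left (Real.sqrt_le_sqrt hSg')
        (by positivity)
    refine step1.trans ?_
    have hkey : Real.sqrt (∑ x, μ x * Vf x) + Real.sqrt (S'.card : ℝ) * Real.sqrt (normSq μ Af)
        ≤ Real.sqrt ((insert i S').card : ℝ) * Real.sqrt (normSq μ f) := by
      have h1 : Real.sqrt ((insert i S').card : ℝ)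
          = Real.sqrt (1 + Real.sqrt (S'.card : ℝ) ^ 2) := by
        rw [Real.sq_sqrt (by positivity : (0:ℝ) ≤ (S'.card : ℝ)),
          Finset.card_insert_of_notMem hi]
        push_cast
        ring_nf
      have h2 : normSq μ f = (∑ x, μ x * Vf x) + normSq μ Af := by
        rw [hSf]; ring
      rw [h1, h2]
      exact sqrt_ineq hSf0 hnAf0 (Real.sqrt_nonneg _)
    calc ε * Real.sqrt (∑ x, μ x * Vf x) * G0
          + Real.sqrt S'.card * ε * Real.sqrt (normSq μ Af) * G0
        = (Real.sqrt (∑ x, μ x * Vf x) + Real.sqrt (S'.card : ℝ) * Real.sqrt (normSq μ Af))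
            * (ε * G0) := by ring
      _ ≤ (Real.sqrt ((insert i S').card : ℝ) * Real.sqrt (normSq μ f)) * (ε * G0) :=
          mul_le_mul_of_nonneg_right hkey (by positivity)
      _ = Real.sqrt ((insert i S').card : ℝ) * ε * Real.sqrt (normSq μ f) * G0 := by ring

lemma oneT (hν : IsProb μ) {ε : ℝ} (hε : 0 ≤ ε) {j : Fin k} {S : Finset (Fin k)} (hj : j ∉ S)
    (hRP : ∀ S' ⊆ S, ∀ i ∈ S, i ∉ S' → ∀ x, 0 < marg μ S' x → PairPseudo (cond μ S' x) ε i j)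
    (f : (∀ i, V i) → ℝ) (hf : Junta S f) :
    normSq μ (Aop μ {j} f) - expect μ f ^ 2 ≤ (S.card : ℝ) * ε ^ 2 * normSq μ f := by
  set g := Aop μ {j} f with hg
  have hjg : Junta {j} g := junta_Aop f
  have one_junta : Junta ({j} : Finset (Fin k)) (fun _ : (∀ i, V i) => (1:ℝ)) := fun _ _ _ => rfl
  have hEg : expect μ g = expect μ f := by
    simpa [expect] using adjoint (S := ({j} : Finset (Fin k))) hν.1 f (fun _ => 1) one_junta
  have hfg : ∑ x, μ x * (f x * g x) = normSq μ g := by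
    have h := adjoint (S := ({j} : Finset (Fin k))) hν.1 f g hjg
    rw [← h, normSq]
    exact Finset.sum_congr rfl fun x _ => by rw [hg]; ring
  have hnf0 : 0 ≤ normSq μ f :=
    Finset.sum_nonneg fun x _ => mul_nonneg (hν.1 x) (sq_nonneg _)
  have hkey := key hν hε hjg S hj hRP f hf
  rw [hfg, hEg] at hkey
  set N2 := normSq μ g - expect μ f ^ 2 with hN2def
  by_cases hN : N2 ≤ 0
  · exact hN.trans (by positivity)
  · push_neg at hN
    have h1 : N2 ≤ Real.sqrt S.card * ε * Real.sqrt (normSq μ f) * Real.sqrt N2 := by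
      refine (le_abs_self _).trans ?_
      calc |N2| = |normSq μ g - expect μ f * expect μ f| := by rw [hN2def]; ring_nf
        _ ≤ _ := hkey
    have hs : 0 < Real.sqrt N2 := Real.sqrt_pos.2 hN
    have hN2 : Real.sqrt N2 ^ 2 = N2 := Real.sq_sqrt hN.le
    have hcard : Real.sqrt (S.card : ℝ) ^ 2 = (S.card : ℝ) :=
      Real.sq_sqrt (by positivity)
    have hnf : Real.sqrt (normSq μ f) ^ 2 = normSq μ f := Real.sq_sqrt hnf0
    set C := Real.sqrt (S.card : ℝ) * ε * Real.sqrt (normSq μ f) with hC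
    have hC0 : 0 ≤ C := by positivity
    have h2 : Real.sqrt N2 * Real.sqrt N2 ≤ C * Real.sqrt N2 := by nlinarith [h1, hN2]
    have h3 : Real.sqrt N2 ≤ C := le_of_mul_le_mul_right h2 hs
    have h4 : N2 ≤ C ^ 2 := by nlinarith [h3, hs.le]
    have h5 : C ^ 2 = (S.card : ℝ) * ε ^ 2 * normSq μ f := by
      rw [hC]
      rw [show (Real.sqrt (S.card : ℝ) * ε * Real.sqrt (normSq μ f)) ^ 2
        = Real.sqrt (S.card : ℝ) ^ 2 * ε ^ 2 * Real.sqrt (normSq μ f) ^ 2 from by ring,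
        hcard, hnf]
    rw [← h5]
    exact h4

lemma step_lemma (hμ : IsProb μ) {ε : ℝ} (hε : 0 ≤ ε) (hprod : EpsProduct μ ε)
    {S T' : Finset (Fin k)} {j : Fin k} (hST : Disjoint S T') (hjT : j ∉ T') (hjS : j ∉ S)
    (f : (∀ i, V i) → ℝ) (hf : Junta S f) :
    normSq μ (Aop μ (insert j T') f) - normSq μ (Aop μ T' f)
      ≤ (S.card : ℝ) * ε ^ 2 * normSq μ f := by
  have one_junta : Junta T' (fun _ : (∀ i, V i) => (1:ℝ)) := fun _ _ _ => rfl
  have e1 : normSq μ (Aop μ (insert j T') f)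
      = ∑ x, μ x * Aop μ T' (fun z => (Aop μ (insert j T') f z) ^ 2) x := by
    have h := adjoint (S := T') hμ.1 (fun z => (Aop μ (insert j T') f z) ^ 2)
      (fun _ => (1:ℝ)) one_junta
    rw [normSq]
    simpa using h.symm
  have e2 : normSq μ f = ∑ x, μ x * Aop μ T' (fun z => f z ^ 2) x := by
    have h := adjoint (S := T') hμ.1 (fun z => f z ^ 2) (fun _ => (1:ℝ)) one_junta
    rw [normSq]
    simpa using h.symm
  -- pointwise bound
  have hpt : ∀ x, 0 < μ x →
      Aop μ T' (fun z => (Aop μ (insert j T') f z) ^ 2) x - (Aop μ T' f x) ^ 2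
        ≤ (S.card : ℝ) * ε ^ 2 * Aop μ T' (fun z => f z ^ 2) x := by
    intro x hx
    have hm : 0 < marg μ T' x := lt_of_lt_of_le hx (le_marg hμ.1)
    set ν := cond μ T' x with hν
    have hνP : IsProb ν := cond_isProb hμ.1 hm
    -- relativized pseudorandomness
    have hRP : ∀ S' ⊆ S, ∀ i ∈ S, i ∉ S' → ∀ x', 0 < marg ν S' x' →
        PairPseudo (cond ν S' x') ε i j := by
      intro S' hsub i hiS hiS' x' hm'
      have hd1 : Disjoint S' T' := hST.mono_left hsub
      set w : ∀ l, V l := fun l => if l ∈ S' then x' l else x l with hw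
      have hwx' : ∀ l ∈ S', w l = x' l := fun l hl => by simp [hw, hl]
      have hwx : ∀ l ∈ T', w l = x l := by
        intro l hl
        have : l ∉ S' := Finset.disjoint_right.1 hd1 hl
        simp [hw, this]
      have hcongr : cond ν S' x' = cond ν S' w :=
        cond_congr fun l hl => (hwx' l hl).symm
      have hmcongr : marg ν S' x' = marg ν S' w :=
        marg_congr fun l hl => (hwx' l hl).symm
      have hcc : cond ν S' w = cond μ (S' ∪ T') w := cond_cond hμ.1 hd1 hm hwx
      have hmw : 0 < marg μ (S' ∪ T') w := by
        rw [hmcongr, marg_cond hμ.1 hd1 hm hwx] at hm'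
        have := mul_pos hm' hm
        rwa [div_mul_cancel₀ _ hm.ne'] at this
      have hiU : i ∉ S' ∪ T' := by
        simp only [Finset.mem_union, not_or]
        exact ⟨hiS', Finset.disjoint_left.1 hST hiS⟩
      have hjU : j ∉ S' ∪ T' := by
        simp only [Finset.mem_union, not_or]
        exact ⟨fun h => hjS (hsub h), hjT⟩
      have hij : i ≠ j := fun h => hjS (h ▸ hiS)
      have hcardU : (S' ∪ T').card ≤ k - 2 := by
        have h1 : i ∉ insert j (S' ∪ T') := by
          simp only [Finset.mem_insert, not_or]
          exact ⟨hij, hiU⟩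
        have h2 : (insert i (insert j (S' ∪ T'))).card ≤ k := by
          calc (insert i (insert j (S' ∪ T'))).card ≤ (univ : Finset (Fin k)).card :=
                Finset.card_le_univ _
            _ = k := Finset.card_fin k
        rw [Finset.card_insert_of_notMem h1, Finset.card_insert_of_notMem hjU] at h2
        omega
      rw [hcongr, hcc]
      exact hprod (S' ∪ T') hcardU w hmw i j hiU hjU hij
    have hone := oneT hνP hε hjS hRP f hf
    -- identify the three quantities
    have id1 : expect ν f = Aop μ T' f x := rfl
    have id2 : normSq ν f = Aop μ T' (fun z => f z ^ 2) x := rfl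
    have id3 : normSq ν (Aop ν {j} f)
        = Aop μ T' (fun z => (Aop μ (insert j T') f z) ^ 2) x := by
      rw [normSq, Aop]
      refine Finset.sum_congr rfl fun z _ => ?_
      by_cases hz : ∀ i ∈ T', z i = x i
      · have hcc : cond ν {j} z = cond μ ({j} ∪ T') z :=
          cond_cond hμ.1 (Finset.disjoint_singleton_left.2 hjT) hm hz
        have : Aop ν {j} f z = Aop μ (insert j T') f z := by
          rw [Aop, Aop, hcc, Finset.insert_eq]
        rw [this]
      · have hz0 : ν z = 0 := by
          rw [hν]
          unfold cond
          rw [if_neg hz]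
        rw [show cond μ T' x z = ν z from rfl, hz0]
        ring
    rw [id1, id2, id3] at hone
    exact hone
  rw [e1, e2, normSq]
  rw [show (∑ x, μ x * Aop μ T' (fun z => (Aop μ (insert j T') f z) ^ 2) x)
        - ∑ x, μ x * (Aop μ T' f x) ^ 2
      = ∑ x, μ x * (Aop μ T' (fun z => (Aop μ (insert j T') f z) ^ 2) x - (Aop μ T' f x) ^ 2)
    from by rw [← Finset.sum_sub_distrib]; exact Finset.sum_congr rfl fun x _ => by ring,
    Finset.mul_sum]
  refine Finset.sum_le_sum fun x _ => ?_
  rcases eq_or_lt_of_le (hμ.1 x) with h | h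
  · rw [← h]
    simp
  · calc μ x * (Aop μ T' (fun z => (Aop μ (insert j T') f z) ^ 2) x - (Aop μ T' f x) ^ 2)
        ≤ μ x * ((S.card : ℝ) * ε ^ 2 * Aop μ T' (fun z => f z ^ 2) x) :=
          mul_le_mul_of_nonneg_left (hpt x h) h.le
      _ = (S.card : ℝ) * ε ^ 2 * (μ x * Aop μ T' (fun z => f z ^ 2) x) := by ring

lemma main_lemma (hμ : IsProb μ) {ε : ℝ} (hε : 0 ≤ ε) (hprod : EpsProduct μ ε)
    (S : Finset (Fin k)) (f : (∀ i, V i) → ℝ) (hf : Junta S f) :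
    ∀ T : Finset (Fin k), Disjoint S T →
      normSq μ (Aop μ T f) - expect μ f ^ 2
        ≤ (S.card : ℝ) * T.card * ε ^ 2 * normSq μ f := by
  intro T
  induction T using Finset.induction_on with
  | empty =>
    intro _
    have hm0 : ∀ x : ∀ i, V i, marg μ ∅ x = 1 := by
      intro x
      rw [show marg μ ∅ x = ∑ z, if ∀ i ∈ (∅ : Finset (Fin k)), z i = x i then μ z else 0
        from rfl]
      simp [hμ.2]
    have hA : ∀ x, Aop μ ∅ f x = expect μ f := by
      intro x
      rw [Aop, expect]
      refine Finset.sum_congr rfl fun z _ => ?_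
      unfold cond
      rw [hm0]
      simp [mul_comm]
    have hn : normSq μ (Aop μ ∅ f) = expect μ f ^ 2 := by
      rw [normSq, Finset.sum_congr rfl fun x (_ : x ∈ univ) => by rw [hA x],
        ← Finset.sum_mul, hμ.2, one_mul]
    rw [hn]
    simp
  | @insert j T' hjT IH =>
    intro hd
    have hdT' : Disjoint S T' := hd.mono_right (Finset.subset_insert j T')
    have hjS : j ∉ S := Finset.disjoint_right.1 hd (Finset.mem_insert_self j T')
    have hstep := step_lemma hμ hε hprod hdT' hjT hjS f hf
    have hIH := IH hdT'
    have hcard : (((insert j T').card : ℕ) : ℝ) = (T'.card : ℝ) + 1 := by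
      rw [Finset.card_insert_of_notMem hjT]
      push_cast
      ring
    calc normSq μ (Aop μ (insert j T') f) - expect μ f ^ 2
        = (normSq μ (Aop μ (insert j T') f) - normSq μ (Aop μ T' f))
          + (normSq μ (Aop μ T' f) - expect μ f ^ 2) := by ring
      _ ≤ (S.card : ℝ) * ε ^ 2 * normSq μ f + (S.card : ℝ) * T'.card * ε ^ 2 * normSq μ f :=
          add_le_add hstep hIH
      _ = (S.card : ℝ) * (insert j T').card * ε ^ 2 * normSq μ f := by
          rw [hcard]
          ring

theorem statement9' (hμ : IsProb μ) {ε : ℝ} (hε : 0 ≤ ε) (hprod : EpsProduct μ ε)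
    (S T : Finset (Fin k)) (hST : Disjoint S T)
    (f : (∀ i, V i) → ℝ) (hf : Junta S f) :
    normSq μ (fun x => Aop μ T f x - expect μ f) ≤
      (S.card : ℝ) * T.card * ε ^ 2 * normSq μ f := by
  have hE : ∑ x, μ x * Aop μ T f x = expect μ f := by
    simpa [expect] using adjoint (S := T) hμ.1 f (fun _ => 1) (fun _ _ _ => rfl)
  have h1 : normSq μ (fun x => Aop μ T f x - expect μ f)
      = normSq μ (Aop μ T f) - expect μ f ^ 2 := by
    rw [normSq, normSq,
      Finset.sum_congr rfl fun x (_ : x ∈ univ) =>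
        show μ x * (Aop μ T f x - expect μ f) ^ 2
          = μ x * Aop μ T f x ^ 2 - 2 * expect μ f * (μ x * Aop μ T f x)
            + expect μ f ^ 2 * μ x from by ring,
      Finset.sum_add_distrib, Finset.sum_sub_distrib, ← Finset.mul_sum, ← Finset.mul_sum,
      hE, hμ.2]
    ring
  rw [h1]
  exact main_lemma hμ hε hprod S f hf T hST

theorem statement9 (k : ℕ) (hk : 1 ≤ k)
    (V : Fin k → Type) [∀ i, Fintype (V i)] [∀ i, DecidableEq (V i)]
    (μ : (∀ i, V i) → ℝ) (ε : ℝ) (hε : 0 ≤ ε) (hμ : IsProb μ) (hprod : EpsProduct μ ε)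
    (S T : Finset (Fin k)) (hST : Disjoint S T)
    (f : (∀ i, V i) → ℝ) (hf : Junta S f) :
    normSq μ (fun x => Aop μ T f x - expect μ f) ≤
      (S.card : ℝ) * T.card * ε ^ 2 * normSq μ f := by
  exact statement9' hμ hε hprod S T hST f hf

end GLL
end
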